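/- arXiv:1609.02051 — 6 statements merged into one kernel-verified Lean document; each statement's English description precedes it below -/
import Mathlib

section
/- If A is a lower triangular n×n complex matrix with 1's on the main diagonal and all entries of absolute value at most 1, then every entry of A⁻¹ has absolute value at most (n-1)!. -/
open Complex

lemma det_abs_le_factorial {m : ℕ} (B : Matrix (Fin m) (Fin m) ℂ)
    (hbd : ∀ i j, ‖B i j‖ ≤ 1) :
    ‖B.det‖ ≤ (Nat.factorial m : ℝ) := by
  rw [Matrix.det_apply]
  calc ‖∑ σ : Equiv.Perm (Fin m), Equiv.Perm.sign σ • ∏ i, B (σ i) i‖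
      ≤ ∑ σ : Equiv.Perm (Fin m), ‖Equiv.Perm.sign σ • ∏ i, B (σ i) i‖ := by
        exact norm_sum_le _ _
    _ ≤ ∑ _σ : Equiv.Perm (Fin m), (1 : ℝ) := by
        apply Finset.sum_le_sum
        intro σ _
        rw [Units.smul_def, zsmul_eq_mul, norm_mul]
        have h1 : ‖((Equiv.Perm.sign σ : ℤ) : ℂ)‖ = 1 := by
          rcases Int.units_eq_one_or (Equiv.Perm.sign σ) with h | h <;> simp [h]
        rw [h1, one_mul, norm_prod]
        calc ∏ i, ‖B (σ i) i‖ ≤ ∏ _i : Fin m, (1 : ℝ) :=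
              Finset.prod_le_prod (fun i _ => norm_nonneg _)
                (fun i _ => hbd _ _)
          _ = 1 := by simp
    _ = (Nat.factorial m : ℝ) := by
        simp [Fintype.card_perm]

theorem inv_entries_le_factorial (n : ℕ) (hn : 1 ≤ n)
    (A : Matrix (Fin n) (Fin n) ℂ)
    (hlow : ∀ i j : Fin n, i < j → A i j = 0)
    (hdiag : ∀ i : Fin n, A i i = 1)
    (hbd : ∀ i j : Fin n, ‖A i j‖ ≤ 1) :
    ∀ i j : Fin n, ‖A⁻¹ i j‖ ≤ (Nat.factorial (n - 1) : ℝ) := by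
  obtain ⟨m, rfl⟩ : ∃ m, n = m + 1 := ⟨n - 1, (Nat.succ_pred_eq_of_pos hn).symm⟩
  have hdet : A.det = 1 := by
    rw [Matrix.det_of_lowerTriangular A (fun i j h => hlow i j h)]
    simp [hdiag]
  have hinv : A⁻¹ = A.adjugate := by
    rw [Matrix.inv_def, hdet]
    simp
  intro i j
  rw [hinv, Matrix.adjugate_fin_succ_eq_det_submatrix, norm_mul]
  have h1 : ‖(-1 : ℂ) ^ ((j : ℕ) + i)‖ = 1 := by
    rw [norm_pow]; simp
  rw [h1, one_mul]
  have := det_abs_le_factorial (A.submatrix j.succAbove i.succAbove)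
    (fun a b => hbd _ _)
  simpa using this
end

section
/- If a ℂ-convex domain D in ℂⁿ contains a complex line, then D is affinely equivalent to ℂ × D' for some domain D' ⊆ ℂⁿ⁻¹. -/
open Set

open Complex unitInterval

lemma mem_slitPlane_of_norm_lt {w : ℂ} (h : ‖w - 1‖ < 1) : w ∈ Complex.slitPlane := by
  rw [Complex.mem_slitPlane_iff]
  left
  have h1 : |(w - 1).re| ≤ ‖w - 1‖ := Complex.abs_re_le_norm _
  have h2 : w.re = 1 + (w - 1).re := by simp
  have := abs_le.mp h1
  linarith

lemma exp_lift_exists {γ : ℝ → ℂ} (hγ : Continuous γ) (hne : ∀ t, γ t ≠ 0) {θ₀ : ℂ}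
    (h0 : Complex.exp θ₀ = γ 0) :
    ∃ θ : ℝ → ℂ, Continuous θ ∧ θ 0 = θ₀ ∧ ∀ t ∈ Icc (0:ℝ) 1, Complex.exp (θ t) = γ t := by
  -- minimum of ‖γ‖ on Icc 0 1
  obtain ⟨t₀, ht₀, hmin'⟩ := isCompact_Icc.exists_isMinOn (⟨0, by norm_num⟩ : (Icc (0:ℝ) 1).Nonempty)
    (hγ.norm.continuousOn)
  have hmin := isMinOn_iff.mp hmin'
  set m : ℝ := ‖γ t₀‖ with hm
  have hmpos : 0 < m := norm_pos_iff.mpr (hne t₀)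
  -- uniform continuity
  have huc := (isCompact_Icc.uniformContinuousOn_of_continuous (hγ.continuousOn : ContinuousOn γ (Icc (0:ℝ) 1)))
  rw [Metric.uniformContinuousOn_iff] at huc
  obtain ⟨δ, hδpos, hδ⟩ := huc m hmpos
  obtain ⟨n, hn⟩ := exists_nat_one_div_lt hδpos
  set N : ℕ := n + 1 with hN
  have hNpos : (0:ℝ) < N := by positivity
  have hstep : (1:ℝ)/N < δ := by exact_mod_cast hn
  have main : ∀ k : ℕ, k ≤ N → ∃ θ : ℝ → ℂ, Continuous θ ∧ θ 0 = θ₀ ∧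
      ∀ t ∈ Icc (0:ℝ) ((k:ℝ) / N), Complex.exp (θ t) = γ t := by
    intro k
    induction k with
    | zero =>
      intro _
      refine ⟨fun _ => θ₀, continuous_const, rfl, ?_⟩
      intro t ht
      simp only [Nat.cast_zero, zero_div] at ht
      have : t = 0 := le_antisymm (by exact_mod_cast ht.2) ht.1
      rw [this, h0]
    | succ k ih =>
      intro hk1
      obtain ⟨θ, hθc, hθ0, hθ⟩ := ih (le_of_lt (Nat.lt_of_succ_le hk1))
      set c : ℝ := (k:ℝ) / N with hc
      set c' : ℝ := ((k+1:ℕ):ℝ) / N with hc'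
      have hcc' : c ≤ c' := by
        rw [hc, hc']
        gcongr
        exact_mod_cast Nat.le_succ k
      have hc0 : 0 ≤ c := by positivity
      have hc'1 : c' ≤ 1 := by
        rw [hc', div_le_one hNpos]; exact_mod_cast hk1
      have hdiff : c' - c = 1/N := by
        rw [hc', hc]; push_cast; ring
      set ι : ℝ → ℝ := fun t => max c (min t c') with hι
      have hιc : Continuous ι := continuous_const.max (continuous_id.min continuous_const)
      have hιmem : ∀ t, ι t ∈ Icc c c' := by
        intro t
        constructor
        · exact le_max_left _ _
        · exact max_le hcc' (min_le_right _ _)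
      have hιIcc : ∀ t, ι t ∈ Icc (0:ℝ) 1 := fun t =>
        ⟨le_trans hc0 (hιmem t).1, le_trans (hιmem t).2 hc'1⟩
      have hcIcc : c ∈ Icc (0:ℝ) 1 := ⟨hc0, le_trans hcc' hc'1⟩
      have hclose : ∀ t, ‖γ (ι t) - γ c‖ < m := by
        intro t
        have hd : dist (ι t) c < δ := by
          rw [Real.dist_eq]
          have h1 := (hιmem t).1
          have h2 := (hιmem t).2
          have habs : |ι t - c| = ι t - c := abs_of_nonneg (by linarith)
          rw [habs]
          calc ι t - c ≤ c' - c := by linarith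
          _ = 1/N := hdiff
          _ < δ := hstep
        have := hδ (ι t) (hιIcc t) c hcIcc hd
        rwa [dist_eq_norm] at this
      have hratio : ∀ t, ‖γ (ι t) / γ c - 1‖ < 1 := by
        intro t
        rw [div_sub_one (hne c), norm_div]
        rw [div_lt_one (norm_pos_iff.mpr (hne c))]
        exact lt_of_lt_of_le (hclose t) (hmin c hcIcc)
      set br : ℝ → ℂ := fun t => θ c + Complex.log (γ (ι t) / γ c) with hbr
      have hbrc : Continuous br := by
        apply continuous_const.add
        rw [continuous_iff_continuousAt]
        intro t
        exact ContinuousAt.clog (((hγ.comp hιc).continuousAt).div continuousAt_const (hne c))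
          (mem_slitPlane_of_norm_lt (hratio t))
      have hιcc : ι c = c := by
        show max c (min c c') = c
        rw [min_eq_left hcc', max_self]
      have hbrmatch : ∀ t : ℝ, t = c → θ t = br t := by
        intro t ht
        rw [ht, hbr]
        simp only [hιcc, div_self (hne c), Complex.log_one, add_zero]
      refine ⟨fun t => if t ≤ c then θ t else br t,
        Continuous.if_le hθc hbrc continuous_id continuous_const hbrmatch, ?_, ?_⟩
      · simp only [if_pos hc0, hθ0]
      · intro t ht
        by_cases htc : t ≤ c
        · simp only [if_pos htc]
          exact hθ t ⟨ht.1, htc⟩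
        · push_neg at htc
          simp only [if_neg (not_le.mpr htc)]
          have hιt : ι t = t := by
            show max c (min t c') = t
            rw [min_eq_left ht.2, max_eq_right (le_of_lt htc)]
          rw [hbr]
          simp only [hιt]
          rw [Complex.exp_add, Complex.exp_log (div_ne_zero (hne t) (hne c)),
            hθ c ⟨hc0, le_rfl⟩]
          rw [mul_comm, div_mul_cancel₀ _ (hne c)]
  obtain ⟨θ, h1, h2, h3⟩ := main N le_rfl
  refine ⟨θ, h1, h2, ?_⟩
  have : (N:ℝ)/N = 1 := div_self (ne_of_gt hNpos)
  rw [this] at h3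
  exact h3

lemma exp_lift_unique {X : Type*} [TopologicalSpace X] {s : Set X} (hs : IsPreconnected s)
    {φ ψ : X → ℂ} (hφ : ContinuousOn φ s) (hψ : ContinuousOn ψ s)
    (h : ∀ x ∈ s, Complex.exp (φ x) = Complex.exp (ψ x))
    {x₀ : X} (hx₀ : x₀ ∈ s) (he : φ x₀ = ψ x₀) : Set.EqOn φ ψ s := by
  haveI : PreconnectedSpace s := Subtype.preconnectedSpace hs
  set u : s → ℂ := fun x => φ x - ψ x with hu
  have hcont : Continuous u := (hφ.restrict.sub hψ.restrict)
  have key : ∀ x : s, u x = 0 ↔ ‖u x‖ < 1 := by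
    intro x
    constructor
    · intro hx; rw [hx]; simp
    · intro hx
      have h1 : Complex.exp (u x) = 1 := by
        rw [hu]; simp only [Complex.exp_sub, h x x.2, div_self (Complex.exp_ne_zero _)]
      obtain ⟨n, hn⟩ := Complex.exp_eq_one_iff.mp h1
      rw [hn] at hx ⊢
      have : (1:ℝ) ≤ ‖(n : ℂ) * (2 * Real.pi * Complex.I)‖ ∨ n = 0 := by
        rcases eq_or_ne n 0 with h0 | h0
        · exact Or.inr h0
        · left
          rw [norm_mul]
          have h2 : (1:ℝ) ≤ ‖(n:ℂ)‖ := by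
            rw [Complex.norm_intCast]
            exact_mod_cast Int.one_le_abs (by exact_mod_cast h0)
          have h3 : (1:ℝ) ≤ ‖(2 * Real.pi * Complex.I : ℂ)‖ := by
            rw [norm_mul, Complex.norm_I, mul_one, norm_mul]
            simp only [Complex.norm_ofNat, Complex.norm_real, Real.norm_eq_abs,
              abs_of_pos Real.pi_pos]
            nlinarith [Real.pi_gt_three]
          nlinarith
      rcases this with h4 | h4
      · linarith
      · simp [h4]
  have hclopen : IsClopen {x : s | u x = 0} := by
    constructor
    · exact isClosed_eq hcont continuous_const
    · have : {x : s | u x = 0} = u ⁻¹' (Metric.ball 0 1) := by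
        ext x
        simp only [mem_setOf_eq, mem_preimage, Metric.mem_ball, dist_zero_right]
        exact key x
      rw [this]
      exact Metric.isOpen_ball.preimage hcont
  have huniv : {x : s | u x = 0} = univ :=
    hclopen.eq_univ ⟨⟨x₀, hx₀⟩, by simp [hu, he]⟩
  intro x hx
  have : (⟨x, hx⟩ : s) ∈ {x : s | u x = 0} := huniv ▸ mem_univ _
  simpa [hu, sub_eq_zero] using this

lemma homotopy_lift_endpoint
    {Hc : I × I → ℂ} (hHc : Continuous Hc) (hne : ∀ p, Hc p ≠ 0)
    (ha : ∀ s : I, Hc (s, 0) = Hc (0, 0)) (hb : ∀ s : I, Hc (s, 1) = Hc (0, 1))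
    {θ θ' : ℝ → ℂ} (hθc : Continuous θ) (hθ'c : Continuous θ')
    (hstart : θ 0 = θ' 0)
    (hθ : ∀ t ∈ Icc (0:ℝ) 1, Complex.exp (θ t) = Hc (0, projIcc 0 1 zero_le_one t))
    (hθ' : ∀ t ∈ Icc (0:ℝ) 1, Complex.exp (θ' t) = Hc (1, projIcc 0 1 zero_le_one t)) :
    θ 1 = θ' 1 := by
  set w₀ : ℂ := θ 0 with hw₀
  set γ : I → ℝ → ℂ := fun s t => Hc (s, projIcc 0 1 zero_le_one t) with hγdef
  have hproj0 : projIcc (0:ℝ) 1 zero_le_one 0 = 0 := projIcc_left _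
  have hproj1 : projIcc (0:ℝ) 1 zero_le_one 1 = 1 := projIcc_right _
  have hγc : ∀ s, Continuous (γ s) :=
    fun s => hHc.comp (continuous_const.prodMk continuous_projIcc)
  have hγne : ∀ s t, γ s t ≠ 0 := fun s t => hne _
  have h0 : ∀ s, Complex.exp w₀ = γ s 0 := by
    intro s
    have h1 := hθ 0 ⟨le_rfl, zero_le_one⟩
    rw [hw₀, h1, hγdef]
    simp only [hproj0, ha s]
  have hΘ : ∀ s : I, ∃ ϑ : ℝ → ℂ, Continuous ϑ ∧ ϑ 0 = w₀ ∧
      ∀ t ∈ Icc (0:ℝ) 1, Complex.exp (ϑ t) = γ s t :=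
    fun s => exp_lift_exists (hγc s) (hγne s) (h0 s)
  set Θ : I → ℝ → ℂ := fun s => (hΘ s).choose with hΘdef
  have hΘc : ∀ s, Continuous (Θ s) := fun s => (hΘ s).choose_spec.1
  have hΘ0 : ∀ s, Θ s 0 = w₀ := fun s => (hΘ s).choose_spec.2.1
  have hΘe : ∀ s, ∀ t ∈ Icc (0:ℝ) 1, Complex.exp (Θ s t) = γ s t :=
    fun s => (hΘ s).choose_spec.2.2
  set E : I → ℂ := fun s => Θ s 1 with hE
  -- local constancy of E
  have hlc : ∀ s₀ : I, ∃ U : Set I, IsOpen U ∧ s₀ ∈ U ∧ ∀ s ∈ U, E s = E s₀ := by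
    intro s₀
    set Ω : Set (I × I) := {p | ‖Hc p - Hc (s₀, p.2)‖ < ‖Hc (s₀, p.2)‖} with hΩ
    have hΩopen : IsOpen Ω := by
      apply isOpen_lt
      · exact (hHc.sub (hHc.comp (continuous_const.prodMk continuous_snd))).norm
      · exact (hHc.comp (continuous_const.prodMk continuous_snd)).norm
    have hsub : {s₀} ×ˢ (univ : Set I) ⊆ Ω := by
      rintro ⟨s, t⟩ ⟨hs, -⟩
      simp only [mem_singleton_iff] at hs
      subst hs
      simp only [hΩ, mem_setOf_eq, sub_self, norm_zero]
      exact norm_pos_iff.mpr (hne _)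
    obtain ⟨U, V, hUopen, hVopen, hU, hV, hUV⟩ :=
      generalized_tube_lemma isCompact_singleton isCompact_univ hΩopen hsub
    refine ⟨U, hUopen, hU rfl, ?_⟩
    intro s hs
    have hratio : ∀ t : ℝ, ‖γ s t / γ s₀ t - 1‖ < 1 := by
      intro t
      have hmem : (s, projIcc 0 1 zero_le_one t) ∈ Ω :=
        hUV ⟨hs, hV (mem_univ _)⟩
      simp only [hΩ, mem_setOf_eq] at hmem
      rw [div_sub_one (hγne s₀ t), norm_div, div_lt_one (norm_pos_iff.mpr (hγne s₀ t))]
      exact hmem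
    set δ : ℝ → ℂ := fun t => Θ s t - Θ s₀ t - Complex.log (γ s t / γ s₀ t) with hδ
    have hδc : Continuous δ := by
      apply ((hΘc s).sub (hΘc s₀)).sub
      exact Continuous.clog ((hγc s).div (hγc s₀) (fun t => hγne s₀ t))
        (fun t => mem_slitPlane_of_norm_lt (hratio t))
    have hδ1 : ∀ t ∈ Icc (0:ℝ) 1, Complex.exp (δ t) = Complex.exp ((fun _ => (0:ℂ)) t) := by
      intro t ht
      simp only [hδ, Complex.exp_sub, hΘe s t ht, hΘe s₀ t ht,
        Complex.exp_log (div_ne_zero (hγne s t) (hγne s₀ t)), Complex.exp_zero]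
      field_simp
      rw [mul_comm (γ s t) (γ s₀ t), div_self (mul_ne_zero (hγne s₀ t) (hγne s t))]
    have hδ0 : δ 0 = 0 := by
      simp only [hδ, hΘ0]
      have : γ s 0 = γ s₀ 0 := by
        simp only [hγdef, hproj0, ha s, ha s₀]
      rw [this, div_self (hγne s₀ 0), Complex.log_one]
      ring
    have heq := exp_lift_unique isPreconnected_Icc hδc.continuousOn
      continuous_const.continuousOn hδ1 (⟨le_rfl, zero_le_one⟩ : (0:ℝ) ∈ Icc (0:ℝ) 1) hδ0
    have hδat1 : δ 1 = 0 := heq ⟨zero_le_one, le_rfl⟩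
    have : γ s 1 = γ s₀ 1 := by
      simp only [hγdef, hproj1, hb s, hb s₀]
    rw [hδ] at hδat1
    simp only [this, div_self (hγne s₀ 1), Complex.log_one] at hδat1
    have : Θ s 1 = Θ s₀ 1 := by linear_combination hδat1
    simpa [hE] using this
  -- E is constant
  have hElc : IsLocallyConstant E := by
    rw [IsLocallyConstant.iff_exists_open]
    intro x
    obtain ⟨U, hU, hxU, hc⟩ := hlc x
    exact ⟨U, hU, hxU, hc⟩
  have hE01 : E 0 = E 1 := hElc.apply_eq_of_preconnectedSpace 0 1
  -- identify with given lifts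
  have h1 : θ 1 = Θ 0 1 := by
    have := exp_lift_unique isPreconnected_Icc hθc.continuousOn (hΘc 0).continuousOn
      (fun t ht => by rw [hθ t ht, hΘe 0 t ht]) (⟨le_rfl, zero_le_one⟩ : (0:ℝ) ∈ Icc (0:ℝ) 1)
      (by rw [hΘ0 0, hw₀])
    exact this ⟨zero_le_one, le_rfl⟩
  have h2 : θ' 1 = Θ 1 1 := by
    have := exp_lift_unique isPreconnected_Icc hθ'c.continuousOn (hΘc 1).continuousOn
      (fun t ht => by rw [hθ' t ht, hΘe 1 t ht]) (⟨le_rfl, zero_le_one⟩ : (0:ℝ) ∈ Icc (0:ℝ) 1)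
      (by rw [hΘ0 1]; exact hstart.symm)
    exact this ⟨zero_le_one, le_rfl⟩
  rw [h1, h2]
  rw [hE] at hE01
  exact hE01

/-- The value at `y` of a continuous logarithm along a path from `x` to `y` inside `F`,
starting at logarithm value `w₀` over `x`. -/
def ExpLiftVal (F : Set ℂ) (x y w₀ w₁ : ℂ) : Prop :=
  ∃ p : Path x y, (∀ t, p t ∈ F) ∧ ∃ θ : ℝ → ℂ, Continuous θ ∧ θ 0 = w₀ ∧
    (∀ t ∈ Icc (0:ℝ) 1, Complex.exp (θ t) = p.extend t) ∧ θ 1 = w₁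

lemma ExpLiftVal.exists_val {F : Set ℂ} (hF : IsPathConnected F) (h0F : (0:ℂ) ∉ F)
    {x y w₀ : ℂ} (hx : x ∈ F) (hy : y ∈ F) (hw : Complex.exp w₀ = x) :
    ∃ w₁, ExpLiftVal F x y w₀ w₁ := by
  obtain ⟨p, hp⟩ := hF.joinedIn x hx y hy
  have hne : ∀ t : ℝ, p.extend t ≠ 0 := by
    intro t
    have : p.extend t ∈ range p.extend := mem_range_self t
    rw [Path.extend_range] at this
    obtain ⟨τ, hτ⟩ := this
    rw [← hτ]
    exact fun h => h0F (h ▸ hp τ)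
  have h0 : Complex.exp w₀ = p.extend 0 := by rw [Path.extend_zero, hw]
  obtain ⟨θ, hθc, hθ0, hθe⟩ := exp_lift_exists p.continuous_extend hne h0
  exact ⟨θ 1, p, hp, θ, hθc, hθ0, hθe, rfl⟩

lemma ExpLiftVal.exp_eq {F : Set ℂ} {x y w₀ w₁ : ℂ} (h : ExpLiftVal F x y w₀ w₁) :
    Complex.exp w₁ = y := by
  obtain ⟨p, hp, θ, hθc, hθ0, hθe, hθ1⟩ := h
  have := hθe 1 ⟨zero_le_one, le_rfl⟩
  rwa [Path.extend_one, hθ1] at this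

lemma ExpLiftVal.unique {F : Set ℂ} (hsc : SimplyConnectedSpace ↥F) (h0F : (0:ℂ) ∉ F)
    {x y w₀ w₁ w₁' : ℂ} (h : ExpLiftVal F x y w₀ w₁) (h' : ExpLiftVal F x y w₀ w₁') :
    w₁ = w₁' := by
  obtain ⟨p, hp, θ, hθc, hθ0, hθe, hθ1⟩ := h
  obtain ⟨p', hp', θ', hθ'c, hθ'0, hθ'e, hθ'1⟩ := h'
  have hx : x ∈ F := by have := hp 0; rwa [p.source] at this
  have hy : y ∈ F := by have := hp 1; rwa [p.target] at this
  -- lift the paths into the subtype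
  set ps : Path (⟨x, hx⟩ : ↥F) ⟨y, hy⟩ :=
    { toFun := fun t => ⟨p t, hp t⟩
      continuous_toFun := p.continuous.subtype_mk _
      source' := Subtype.ext p.source
      target' := Subtype.ext p.target } with hpsdef
  set ps' : Path (⟨x, hx⟩ : ↥F) ⟨y, hy⟩ :=
    { toFun := fun t => ⟨p' t, hp' t⟩
      continuous_toFun := p'.continuous.subtype_mk _
      source' := Subtype.ext p'.source
      target' := Subtype.ext p'.target } with hps'def
  haveI := hsc
  have hhom : ps.Homotopic ps' := SimplyConnectedSpace.paths_homotopic ps ps'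
  obtain ⟨H⟩ := hhom
  set Hc : I × I → ℂ := fun q => ((H q : ↥F) : ℂ) with hHcdef
  have hHcc : Continuous Hc := continuous_subtype_val.comp H.continuous
  have hHcne : ∀ q, Hc q ≠ 0 := fun q h => h0F (h ▸ (H q).2)
  have h0mem : (0:I) ∈ ({0, 1} : Set I) := by left; rfl
  have h1mem : (1:I) ∈ ({0, 1} : Set I) := by right; rfl
  have haa : ∀ s : I, Hc (s, 0) = Hc (0, 0) := by
    intro s
    simp only [hHcdef]
    rw [H.eq_fst s h0mem, H.eq_fst 0 h0mem]
  have hbb : ∀ s : I, Hc (s, 1) = Hc (0, 1) := by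
    intro s
    simp only [hHcdef]
    rw [H.eq_fst s h1mem, H.eq_fst 0 h1mem]
  have hθH : ∀ t ∈ Icc (0:ℝ) 1, Complex.exp (θ t) = Hc (0, projIcc 0 1 zero_le_one t) := by
    intro t ht
    rw [hθe t ht]
    simp only [hHcdef]
    rw [H.apply_zero]
    show p.extend t = (ps (projIcc 0 1 zero_le_one t) : ℂ)
    rw [projIcc_of_mem _ ht]
    rw [p.extend_apply ht]
    rfl
  have hθ'H : ∀ t ∈ Icc (0:ℝ) 1, Complex.exp (θ' t) = Hc (1, projIcc 0 1 zero_le_one t) := by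
    intro t ht
    rw [hθ'e t ht]
    simp only [hHcdef]
    rw [H.apply_one]
    show p'.extend t = (ps' (projIcc 0 1 zero_le_one t) : ℂ)
    rw [projIcc_of_mem _ ht]
    rw [p'.extend_apply ht]
    rfl
  have := homotopy_lift_endpoint hHcc hHcne haa hbb hθc hθ'c (by rw [hθ0, hθ'0]) hθH hθ'H
  rw [← hθ1, ← hθ'1, this]

/-- A domain is `ℂ`-convex if every nonempty intersection with a complex affine line is
connected and simply connected. -/
def CConvex (n : ℕ) (D : Set (EuclideanSpace ℂ (Fin n))) : Prop :=
  ∀ a b : EuclideanSpace ℂ (Fin n), b ≠ 0 →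
    ({t : ℂ | a + t • b ∈ D}).Nonempty →
      IsConnected {t : ℂ | a + t • b ∈ D} ∧
        SimplyConnectedSpace {t : ℂ | a + t • b ∈ D}

theorem cconvex_translation (n : ℕ) (D : Set (EuclideanSpace ℂ (Fin n))) (hD : IsOpen D)
    (hcc : CConvex n D) (a b : EuclideanSpace ℂ (Fin n)) (hb : b ≠ 0)
    (hline : ∀ t : ℂ, a + t • b ∈ D) : ∀ z ∈ D, ∀ s : ℂ, z + s • b ∈ D := by
  classical
  intro z hz s₀
  by_cases hzl : ∃ t : ℂ, z = a + t • b
  · obtain ⟨t, rfl⟩ := hzl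
    have := hline (t + s₀)
    rwa [add_smul, ← add_assoc] at this
  by_contra hq
  set q : EuclideanSpace ℂ (Fin n) := z + s₀ • b with hqdef
  set d : EuclideanSpace ℂ (Fin n) := a - z with hddef
  have hdir : ∀ m : ℂ, m • b + d ≠ 0 := by
    intro m hm
    apply hzl
    refine ⟨m, ?_⟩
    have h1 : a + m • b - z = 0 := by rw [← hm, hddef]; module
    have h2 := sub_eq_zero.mp h1
    rw [← h2]
  -- the family of slices through q
  set Fset : ℂ → Set ℂ := fun m => {u : ℂ | q + u • (m • b + d) ∈ D} with hFsetdef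
  have hF1 : ∀ m : ℂ, (1:ℂ) ∈ Fset m := by
    intro m
    show q + (1:ℂ) • (m • b + d) ∈ D
    have : q + (1:ℂ) • (m • b + d) = a + (s₀ + m) • b := by
      rw [hqdef, hddef]; module
    rw [this]; exact hline _
  have hF0 : ∀ m : ℂ, (0:ℂ) ∉ Fset m := by
    intro m hmem
    apply hq
    have heq : q + (0:ℂ) • (m • b + d) = q := by module
    have hmem' : q + (0:ℂ) • (m • b + d) ∈ D := hmem
    rwa [heq] at hmem'
  have hFcc : ∀ m : ℂ, IsConnected (Fset m) ∧ SimplyConnectedSpace ↥(Fset m) :=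
    fun m => hcc q _ (hdir m) ⟨1, hF1 m⟩
  have hFopen : ∀ m : ℂ, IsOpen (Fset m) := by
    intro m
    exact hD.preimage (continuous_const.add (continuous_id.smul continuous_const))
  have hFpc : ∀ m : ℂ, IsPathConnected (Fset m) := by
    intro m
    haveI := (hFcc m).2
    exact isPathConnected_iff_pathConnectedSpace.mpr inferInstance
  -- the incidence set
  set Γ : Set (ℂ × ℂ) := {p | q + p.2 • (p.1 • b + d) ∈ D} with hΓdef
  have hΓopen : IsOpen Γ := by
    apply hD.preimage
    exact continuous_const.add (continuous_snd.smul
      ((continuous_fst.smul continuous_const).add continuous_const))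
  have hΓmem : ∀ m u : ℂ, (m, u) ∈ Γ ↔ u ∈ Fset m := by intro m u; rfl
  -- horizontal slices
  set Hv : ℂ → Set ℂ := fun v => {t : ℂ | (z + v • d) + t • b ∈ D} with hHvdef
  have hkey : ∀ m v : ℂ, q + v • (m • b + d) = (z + v • d) + (s₀ + v * m) • b := by
    intro m v; rw [hqdef, hddef]; module
  have hΓHv : ∀ m v : ℂ, v ∈ Fset m ↔ s₀ + v * m ∈ Hv v := by
    intro m v
    show q + v • (m • b + d) ∈ D ↔ _
    rw [hkey m v]; rfl
  -- Q: the admissible logarithm endpoint values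
  set Q : ℂ → ℂ → Prop := fun v w => ∃ m, v ∈ Fset m ∧ ExpLiftVal (Fset m) 1 v 0 w with hQdef
  have hQex : ∀ v m, v ∈ Fset m → ∃ w, Q v w := by
    intro v m hv
    obtain ⟨w, hw⟩ := ExpLiftVal.exists_val (hFpc m) (hF0 m) (hF1 m) hv Complex.exp_zero
    exact ⟨w, m, hv, hw⟩
  have hvne : ∀ v m, v ∈ Fset m → v ≠ 0 := by
    intro v m hv h
    exact hF0 m (h ▸ hv)
  -- uniqueness of the value across different slices
  have hQuniq : ∀ v w w', Q v w → Q v w' → w = w' := by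
    intro v w w' ⟨m1, hv1, h1⟩ ⟨m2, hv2, h2⟩
    have hvne0 : v ≠ 0 := hvne v m1 hv1
    set Γv : Set ℂ := {m | v ∈ Fset m} with hΓvdef
    have hΓvconn : IsConnected Γv := by
      have hHvconn : IsConnected (Hv v) :=
        (hcc (z + v • d) b hb ⟨s₀ + v * m1, (hΓHv m1 v).mp hv1⟩).1
      have himg : Γv = (fun t => (t - s₀) / v) '' (Hv v) := by
        ext m
        constructor
        · intro hm
          exact ⟨s₀ + v * m, (hΓHv m v).mp hm, by field_simp; ring⟩
        · rintro ⟨t, ht, rfl⟩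
          rw [hΓvdef, mem_setOf_eq, hΓHv]
          have : s₀ + v * ((t - s₀) / v) = t := by field_simp; ring
          rwa [this]
      rw [himg]
      exact hHvconn.image _ ((continuous_id.sub continuous_const).div_const v).continuousOn
    -- the choice function on Γv
    have hex : ∀ m : ↥Γv, ∃ w, ExpLiftVal (Fset ↑m) 1 v 0 w := by
      intro m
      exact ExpLiftVal.exists_val (hFpc ↑m) (hF0 ↑m) (hF1 ↑m) m.2 Complex.exp_zero
    set g : ↥Γv → ℂ := fun m => (hex m).choose with hgdef
    have hgspec : ∀ m : ↥Γv, ExpLiftVal (Fset ↑m) 1 v 0 (g m) := fun m => (hex m).choose_spec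
    have hglc : IsLocallyConstant g := by
      rw [IsLocallyConstant.iff_exists_open]
      intro m₀
      obtain ⟨p, hp, θ, hθc, hθ0, hθe, hθ1⟩ := hgspec m₀
      have hsub : {(↑m₀ : ℂ)} ×ˢ (range ⇑p) ⊆ Γ := by
        rintro ⟨m', u⟩ ⟨hm', hu⟩
        simp only [mem_singleton_iff] at hm'
        obtain ⟨τ, hτ⟩ := hu
        have hτ' : p τ = u := hτ
        rw [hm', hΓmem]
        exact hτ' ▸ hp τ
      obtain ⟨U, V, hUopen, hVopen, hU, hV, hUV⟩ :=
        generalized_tube_lemma isCompact_singleton (isCompact_range p.continuous) hΓopen hsub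
      refine ⟨Subtype.val ⁻¹' U, hUopen.preimage continuous_subtype_val, hU rfl, ?_⟩
      intro m hm
      have hpm : ∀ τ, p τ ∈ Fset ↑m := by
        intro τ
        have : ((↑m : ℂ), p τ) ∈ Γ := hUV ⟨hm, hV (mem_range_self τ)⟩
        rwa [hΓmem] at this
      have helv : ExpLiftVal (Fset ↑m) 1 v 0 (g m₀) := ⟨p, hpm, θ, hθc, hθ0, hθe, hθ1⟩
      exact ExpLiftVal.unique (hFcc ↑m).2 (hF0 ↑m) (hgspec m) helv
    haveI : PreconnectedSpace ↥Γv := Subtype.preconnectedSpace hΓvconn.isPreconnected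
    have hgconst : g ⟨m1, hv1⟩ = g ⟨m2, hv2⟩ := hglc.apply_eq_of_preconnectedSpace _ _
    have e1 : w = g ⟨m1, hv1⟩ := ExpLiftVal.unique (hFcc m1).2 (hF0 m1) h1 (hgspec ⟨m1, hv1⟩)
    have e2 : w' = g ⟨m2, hv2⟩ := ExpLiftVal.unique (hFcc m2).2 (hF0 m2) h2 (hgspec ⟨m2, hv2⟩)
    rw [e1, e2, hgconst]
  -- the global logarithm
  set lam : ℂ → ℂ := fun v => if h : ∃ w, Q v w then h.choose else 0 with hlamdef
  have hlam : ∀ v w, Q v w → lam v = w := by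
    intro v w hw
    have hex : ∃ w, Q v w := ⟨w, hw⟩
    rw [hlamdef]
    simp only [dif_pos hex]
    exact hQuniq v _ w hex.choose_spec hw
  have hlamQ : ∀ v m, v ∈ Fset m → Q v (lam v) := by
    intro v m hv
    obtain ⟨w, hw⟩ := hQex v m hv
    rw [hlam v w hw]; exact hw
  have hexplam : ∀ v m, v ∈ Fset m → Complex.exp (lam v) = v := by
    intro v m hv
    obtain ⟨m', hv', hEL⟩ := hlamQ v m hv
    exact hEL.exp_eq
  -- local form of lam near any point of any slice
  have hball : ∀ v₀ m₀ : ℂ, v₀ ∈ Fset m₀ → ∃ ρ > 0, ∀ v ∈ Metric.ball v₀ ρ,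
      v ∈ Fset m₀ ∧ lam v = lam v₀ + Complex.log (v / v₀) := by
    intro v₀ m₀ hv₀
    have hv₀ne : v₀ ≠ 0 := hvne v₀ m₀ hv₀
    obtain ⟨ρ₀, hρ₀pos, hρ₀⟩ := Metric.isOpen_iff.mp (hFopen m₀) v₀ hv₀
    set ρ : ℝ := min ρ₀ ‖v₀‖ with hρdef
    have hρpos : 0 < ρ := lt_min hρ₀pos (norm_pos_iff.mpr hv₀ne)
    have hballsub : Metric.ball v₀ ρ ⊆ Fset m₀ :=
      subset_trans (Metric.ball_subset_ball (min_le_left _ _)) hρ₀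
    have hballne : ∀ w ∈ Metric.ball v₀ ρ, w ≠ 0 := by
      intro w hw h0
      rw [h0, Metric.mem_ball, dist_eq_norm, zero_sub, norm_neg] at hw
      have h2 : ρ ≤ ‖v₀‖ := min_le_right _ _
      linarith
    have hslit : ∀ w ∈ Metric.ball v₀ ρ, w / v₀ ∈ Complex.slitPlane := by
      intro w hw
      apply mem_slitPlane_of_norm_lt
      rw [div_sub_one hv₀ne, norm_div, div_lt_one (norm_pos_iff.mpr hv₀ne)]
      rw [Metric.mem_ball, dist_eq_norm] at hw
      exact lt_of_lt_of_le hw (min_le_right _ _)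
    refine ⟨ρ, hρpos, ?_⟩
    intro v hv
    refine ⟨hballsub hv, ?_⟩
    obtain ⟨w0', hw0'⟩ := ExpLiftVal.exists_val (hFpc m₀) (hF0 m₀) (hF1 m₀) hv₀ Complex.exp_zero
    have hlamv₀ : lam v₀ = w0' := hlam v₀ w0' ⟨m₀, hv₀, hw0'⟩
    obtain ⟨p, hp, θ, hθc, hθ0, hθe, hθ1⟩ := hw0'
    have hexpv₀ : Complex.exp (lam v₀) = v₀ := hexplam v₀ m₀ hv₀
    set seg : Path v₀ v :=
      { toFun := fun τ => v₀ + (((τ : ℝ) : ℂ)) * (v - v₀)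
        continuous_toFun := continuous_const.add
          ((Complex.continuous_ofReal.comp continuous_subtype_val).mul continuous_const)
        source' := by simp
        target' := by simp } with hsegdef
    have hsegball : ∀ τ : I, seg τ ∈ Metric.ball v₀ ρ := by
      intro τ
      show v₀ + (((τ : ℝ) : ℂ)) * (v - v₀) ∈ _
      rw [Metric.mem_ball, dist_eq_norm]
      have h1 : v₀ + (((τ : ℝ) : ℂ)) * (v - v₀) - v₀ = (((τ : ℝ) : ℂ)) * (v - v₀) := by ring
      rw [h1, norm_mul]
      have h2 : ‖(((τ : ℝ) : ℂ))‖ ≤ 1 := by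
        rw [Complex.norm_real, Real.norm_eq_abs, _root_.abs_of_nonneg τ.2.1]
        exact τ.2.2
      have h3 : ‖v - v₀‖ < ρ := by
        have := hv; rwa [Metric.mem_ball, dist_eq_norm] at this
      nlinarith [norm_nonneg (v - v₀), norm_nonneg (((τ : ℝ) : ℂ))]
    set pv : Path (1:ℂ) v := p.trans seg with hpvdef
    have hpv : ∀ τ : I, pv τ ∈ Fset m₀ := by
      intro τ
      rw [hpvdef, Path.trans_apply]
      split_ifs with h
      · exact hp _
      · exact hballsub (hsegball _)
    have hextmid : ∀ r : ℝ, 0 ≤ r → r ≤ 1/2 → pv.extend r = p.extend (2*r) := by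
      intro r h0 h12
      rw [Path.extend_apply pv ⟨h0, by linarith⟩,
        Path.extend_apply p ⟨by linarith, by linarith⟩, hpvdef, Path.trans_apply]
      split_ifs with h
      · rfl
      · exact absurd h12 h
    have hextge : ∀ r : ℝ, 1/2 ≤ r → pv.extend r ∈ Metric.ball v₀ ρ := by
      intro r hr
      by_cases hr1 : r ≤ 1
      · rw [Path.extend_apply pv ⟨by linarith, hr1⟩, hpvdef, Path.trans_apply]
        split_ifs with h
        · have hr2 : r = 1/2 := le_antisymm h hr
          have key : ∀ (τ : I), (τ : ℝ) = 1 → p τ ∈ Metric.ball v₀ ρ := by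
            intro τ hτ
            have hτ1 : τ = 1 := Subtype.ext hτ
            rw [hτ1, p.target]
            exact Metric.mem_ball_self hρpos
          exact key _ (by show (2*r : ℝ) = 1; rw [hr2]; norm_num)
        · exact hsegball _
      · push_neg at hr1
        rw [Path.extend_of_one_le pv (le_of_lt hr1)]
        exact hv
    set br : ℝ → ℂ := fun t => lam v₀ + Complex.log (pv.extend (max t (1/2)) / v₀) with hbrdef
    have hbrc : Continuous br := by
      apply continuous_const.add
      apply Continuous.clog
      · exact (pv.continuous_extend.comp (continuous_id.max continuous_const)).div_const v₀
      · intro t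
        exact hslit _ (hextge _ (le_max_right _ _))
    have hmid : pv.extend (1/2 : ℝ) = v₀ := by
      rw [hextmid (1/2) (by norm_num) le_rfl]
      norm_num [Path.extend_one]
    have hθ1' : θ 1 = lam v₀ := by rw [hθ1, hlamv₀]
    have hbound : ∀ t : ℝ, t = 1/2 → θ (2*t) = br t := by
      intro t ht
      rw [ht, hbrdef]
      simp only
      rw [max_self, hmid, div_self hv₀ne, Complex.log_one, add_zero]
      norm_num [hθ1']
    set θv : ℝ → ℂ := fun t => if t ≤ (1/2:ℝ) then θ (2*t) else br t with hθvdef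
    have hθvc : Continuous θv :=
      Continuous.if_le (hθc.comp (continuous_const.mul continuous_id)) hbrc
        continuous_id continuous_const hbound
    have hθv0 : θv 0 = 0 := by
      rw [hθvdef]
      simp only [if_pos (by norm_num : (0:ℝ) ≤ 1/2)]
      norm_num [hθ0]
    have hθve : ∀ t ∈ Icc (0:ℝ) 1, Complex.exp (θv t) = pv.extend t := by
      intro t ht
      rw [hθvdef]
      simp only
      by_cases h : t ≤ 1/2
      · rw [if_pos h, hθe (2*t) ⟨by linarith [ht.1], by linarith⟩, ← hextmid t ht.1 h]
      · push_neg at h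
        rw [if_neg (not_le.mpr h), hbrdef]
        simp only
        rw [max_eq_left (le_of_lt h)]
        have hne2 : pv.extend t ≠ 0 := hballne _ (hextge t (le_of_lt h))
        rw [Complex.exp_add, Complex.exp_log (div_ne_zero hne2 hv₀ne), hexpv₀,
          mul_comm, div_mul_cancel₀ _ hv₀ne]
    have hθv1 : θv 1 = lam v₀ + Complex.log (v / v₀) := by
      rw [hθvdef]
      simp only [if_neg (by norm_num : ¬ (1:ℝ) ≤ 1/2)]
      rw [hbrdef]
      simp only
      rw [max_eq_left (by norm_num : (1:ℝ)/2 ≤ 1), Path.extend_one]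
    have hQv : Q v (lam v₀ + Complex.log (v/v₀)) :=
      ⟨m₀, hballsub hv, pv, hpv, θv, hθvc, hθv0, hθve, hθv1⟩
    exact hlam v _ hQv
  -- the circle around the origin in the v-plane
  have hW : IsOpen {v : ℂ | z + v • d ∈ D} :=
    hD.preimage (continuous_const.add (continuous_id.smul continuous_const))
  have h0W : (0:ℂ) ∈ {v : ℂ | z + v • d ∈ D} := by
    show z + (0:ℂ) • d ∈ D
    have h1 : z + (0:ℂ) • d = z := by module
    rw [h1]; exact hz
  obtain ⟨r, hrpos, hr⟩ := Metric.isOpen_iff.mp hW 0 h0W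
  set c : ℝ → ℂ := fun x => ((r/2 : ℝ) : ℂ) * Complex.exp (↑x * Complex.I) with hcdef
  have hcont : Continuous c := continuous_const.mul
    ((Complex.continuous_ofReal.mul continuous_const).cexp)
  have hcnorm : ∀ x, ‖c x‖ = r/2 := by
    intro x
    rw [hcdef]
    simp only [norm_mul, Complex.norm_real, Real.norm_eq_abs]
    rw [Complex.norm_exp_ofReal_mul_I, mul_one,
      _root_.abs_of_pos (by linarith : (0:ℝ) < r/2)]
  have hcne : ∀ x, c x ≠ 0 := by
    intro x h
    have := hcnorm x
    rw [h, norm_zero] at this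
    linarith
  have hcmem : ∀ x : ℝ, c x ∈ Fset (-s₀ / c x) := by
    intro x
    show q + c x • ((-s₀ / c x) • b + d) ∈ D
    rw [hkey (-s₀ / c x) (c x)]
    have h2 : s₀ + c x * (-s₀ / c x) = 0 := by
      rw [mul_comm, div_mul_cancel₀ _ (hcne x)]
      ring
    rw [h2, zero_smul, add_zero]
    apply hr
    show dist (c x) 0 < r
    rw [dist_zero_right, hcnorm]
    linarith
  have hgc : Continuous (fun x => lam (c x)) := by
    rw [continuous_iff_continuousAt]
    intro x₀
    obtain ⟨ρ, hρpos, hρ⟩ := hball (c x₀) (-s₀ / c x₀) (hcmem x₀)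
    have hev : ∀ᶠ x in nhds x₀, lam (c x₀) + Complex.log (c x / c x₀) = lam (c x) := by
      have hnb : ∀ᶠ x in nhds x₀, c x ∈ Metric.ball (c x₀) ρ :=
        hcont.continuousAt (Metric.ball_mem_nhds _ hρpos)
      filter_upwards [hnb] with x hx
      exact ((hρ (c x) hx).2).symm
    have hca : ContinuousAt (fun x => lam (c x₀) + Complex.log (c x / c x₀)) x₀ := by
      apply ContinuousAt.add continuousAt_const
      apply ContinuousAt.clog
      · exact hcont.continuousAt.div_const _
      · rw [div_self (hcne x₀)]
        exact Complex.one_mem_slitPlane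
    exact hca.congr hev
  have hgexp : ∀ x, Complex.exp (lam (c x)) = c x := fun x => hexplam _ _ (hcmem x)
  set hfun : ℝ → ℂ := fun x => lam (c x) - (↑(Real.log (r/2)) + ↑x * Complex.I) with hhdef
  have hhc : Continuous hfun :=
    hgc.sub (continuous_const.add (Complex.continuous_ofReal.mul continuous_const))
  have hhe : ∀ x, Complex.exp (hfun x) = 1 := by
    intro x
    rw [hhdef]
    simp only
    rw [Complex.exp_sub, hgexp, Complex.exp_add, ← Complex.ofReal_exp,
      Real.exp_log (by linarith : (0:ℝ) < r/2), hcdef]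
    simp only
    rw [div_self (mul_ne_zero (by
      simp only [ne_eq, Complex.ofReal_eq_zero]
      intro h; linarith) (Complex.exp_ne_zero _))]
  have hconst := exp_lift_unique (isPreconnected_univ (α := ℝ)) hhc.continuousOn
    (continuous_const.continuousOn (f := fun _ : ℝ => hfun 0))
    (fun x _ => by rw [hhe x, hhe 0]) (mem_univ (0:ℝ)) rfl
  have h2π := hconst (mem_univ (2 * Real.pi))
  have hc2π : c (2 * Real.pi) = c 0 := by
    rw [hcdef]
    simp only
    congr 1
    push_cast
    rw [Complex.exp_two_pi_mul_I]
    norm_num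
  rw [hhdef] at h2π
  simp only [hc2π] at h2π
  have h3 : (↑(2 * Real.pi) * Complex.I : ℂ) = ↑(0:ℝ) * Complex.I := by
    have := h2π
    push_cast at this ⊢
    linear_combination -this
  have h4 : (2 * Real.pi : ℝ) = 0 := by
    have := congrArg Complex.im h3
    simpa using this
  have := Real.pi_pos
  linarith

theorem cconvex_with_line_is_cylinder (n : ℕ) (hn : 1 ≤ n)
    (D : Set (EuclideanSpace ℂ (Fin n))) (hD : IsOpen D) (hconn : IsConnected D)
    (hcc : CConvex n D)
    (a b : EuclideanSpace ℂ (Fin n)) (hb : b ≠ 0) (hline : ∀ t : ℂ, a + t • b ∈ D) :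
    ∃ (T : EuclideanSpace ℂ (Fin n) ≃ᵃ[ℂ] ℂ × EuclideanSpace ℂ (Fin (n - 1)))
      (D' : Set (EuclideanSpace ℂ (Fin (n - 1)))),
      IsOpen D' ∧ IsConnected D' ∧ T '' D = Set.univ ×ˢ D' := by
  classical
  have hinv : ∀ z ∈ D, ∀ s : ℂ, z + s • b ∈ D := cconvex_translation n D hD hcc a b hb hline
  have hDinv : ∀ (x : EuclideanSpace ℂ (Fin n)) (t : ℂ), x + t • b ∈ D ↔ x ∈ D := by
    intro x t
    constructor
    · intro h
      have h2 := hinv _ h (-t)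
      have heq : x + t • b + (-t) • b = x := by module
      rwa [heq] at h2
    · intro h
      exact hinv x h t
  -- the linear functional f with f b = 1
  have hbb : (inner ℂ b b : ℂ) ≠ 0 := inner_self_ne_zero.mpr hb
  set f : EuclideanSpace ℂ (Fin n) →ₗ[ℂ] ℂ :=
    ((inner ℂ b b : ℂ))⁻¹ • ((innerSL ℂ b).toLinearMap) with hfdef
  have hfb : f b = 1 := by
    rw [hfdef]
    simp only [LinearMap.smul_apply, ContinuousLinearMap.coe_coe, innerSL_apply_apply, smul_eq_mul]
    exact inv_mul_cancel₀ hbb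
  set K := LinearMap.ker f with hKdef
  have hπmem : ∀ x, ((LinearMap.id : EuclideanSpace ℂ (Fin n) →ₗ[ℂ] EuclideanSpace ℂ (Fin n)) - f.smulRight b) x ∈ K := by
    intro x
    rw [hKdef, LinearMap.mem_ker]
    simp only [LinearMap.sub_apply, LinearMap.id_apply, LinearMap.smulRight_apply, map_sub,
      map_smul, hfb, smul_eq_mul, mul_one, sub_self]
  set fwd : EuclideanSpace ℂ (Fin n) →ₗ[ℂ] ℂ × K :=
    LinearMap.prod f (((LinearMap.id : EuclideanSpace ℂ (Fin n) →ₗ[ℂ] EuclideanSpace ℂ (Fin n)) - f.smulRight b).codRestrict K hπmem) with hfwddef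
  set bwd : ℂ × K →ₗ[ℂ] EuclideanSpace ℂ (Fin n) :=
    (LinearMap.fst ℂ ℂ K).smulRight b + K.subtype.comp (LinearMap.snd ℂ ℂ K) with hbwddef
  have hbwd_apply : ∀ (t : ℂ) (k : K), bwd (t, k) = t • b + ↑k := by
    intro t k
    simp only [hbwddef, LinearMap.add_apply, LinearMap.smulRight_apply, LinearMap.fst_apply,
      LinearMap.coe_comp, Function.comp_apply, Submodule.coe_subtype, LinearMap.snd_apply]
  have hfwd_fst : ∀ x, (fwd x).1 = f x := by
    intro x
    simp only [hfwddef, LinearMap.prod_apply, Function.prod]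
  have hfwd_snd : ∀ x, ((fwd x).2 : EuclideanSpace ℂ (Fin n)) = x - f x • b := by
    intro x
    simp only [hfwddef, LinearMap.prod_apply, Function.prod, LinearMap.codRestrict_apply,
      LinearMap.sub_apply, LinearMap.id_apply, LinearMap.smulRight_apply]
  have hc1 : fwd.comp bwd = LinearMap.id := by
    apply LinearMap.ext
    rintro ⟨t, k⟩
    have hk : f ↑k = 0 := LinearMap.mem_ker.mp k.2
    have hfval : f (bwd (t, k)) = t := by
      rw [hbwd_apply, map_add, map_smul, hfb, hk, smul_eq_mul, mul_one, add_zero]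
    rw [LinearMap.comp_apply, LinearMap.id_apply]
    apply Prod.ext
    · rw [hfwd_fst, hfval]
    · apply Subtype.ext
      rw [hfwd_snd, hfval, hbwd_apply]
      module
  have hc2 : bwd.comp fwd = LinearMap.id := by
    apply LinearMap.ext
    intro x
    rw [LinearMap.comp_apply, LinearMap.id_apply]
    have : fwd x = ((fwd x).1, (fwd x).2) := rfl
    rw [this, hbwd_apply, hfwd_fst]
    have h2 := hfwd_snd x
    rw [h2]
    module
  set e₁ : EuclideanSpace ℂ (Fin n) ≃ₗ[ℂ] ℂ × K := LinearEquiv.ofLinear fwd bwd hc1 hc2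
    with he₁def
  -- dimension count
  have hrange : LinearMap.range f = ⊤ := by
    rw [LinearMap.range_eq_top]
    intro w
    refine ⟨w • b, ?_⟩
    rw [map_smul, hfb, smul_eq_mul, mul_one]
  have hrank := f.finrank_range_add_finrank_ker
  rw [hrange, finrank_top, Module.finrank_self, finrank_euclideanSpace_fin] at hrank
  have hKrank : Module.finrank ℂ K = n - 1 := by rw [hKdef]; omega
  have hg : Nonempty (K ≃ₗ[ℂ] EuclideanSpace ℂ (Fin (n - 1))) := by
    apply FiniteDimensional.nonempty_linearEquiv_of_finrank_eq
    rw [hKrank, finrank_euclideanSpace_fin]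
  set g : K ≃ₗ[ℂ] EuclideanSpace ℂ (Fin (n - 1)) := hg.some with hgdef
  set T₀ : EuclideanSpace ℂ (Fin n) ≃ₗ[ℂ] ℂ × EuclideanSpace ℂ (Fin (n - 1)) :=
    e₁.trans ((LinearEquiv.refl ℂ ℂ).prodCongr g) with hT₀def
  have hT₀symm : ∀ (t : ℂ) (y : EuclideanSpace ℂ (Fin (n - 1))),
      T₀.symm (t, y) = t • b + (g.symm y : EuclideanSpace ℂ (Fin n)) := by
    intro t y
    rw [hT₀def]
    simp only [LinearEquiv.trans_symm, LinearEquiv.trans_apply, LinearEquiv.prodCongr_symm,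
      LinearEquiv.prodCongr_apply, LinearEquiv.refl_symm, LinearEquiv.refl_apply]
    rw [he₁def, LinearEquiv.ofLinear_symm_apply]
    simp only [hbwddef, LinearMap.add_apply, LinearMap.smulRight_apply, LinearMap.fst_apply,
      LinearMap.coe_comp, Function.comp_apply, Submodule.coe_subtype, LinearMap.snd_apply]
  set T := T₀.toAffineEquiv with hTdef
  have hTcoe : ∀ x, T x = T₀ x := fun x => rfl
  set D' : Set (EuclideanSpace ℂ (Fin (n - 1))) :=
    {y | (g.symm y : EuclideanSpace ℂ (Fin n)) ∈ D} with hD'def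
  have hmain : ∀ p : ℂ × EuclideanSpace ℂ (Fin (n - 1)), p ∈ T '' D ↔ T₀.symm p ∈ D := by
    intro p
    constructor
    · rintro ⟨x, hx, rfl⟩
      rw [hTcoe, LinearEquiv.symm_apply_apply]
      exact hx
    · intro hp
      exact ⟨T₀.symm p, hp, by rw [hTcoe, LinearEquiv.apply_symm_apply]⟩
  have hiden : T '' D = Set.univ ×ˢ D' := by
    ext ⟨t, y⟩
    rw [hmain (t, y), hT₀symm]
    have hcomm : t • b + (g.symm y : EuclideanSpace ℂ (Fin n)) =
        (g.symm y : EuclideanSpace ℂ (Fin n)) + t • b := by module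
    rw [hcomm, hDinv]
    simp only [hD'def, mem_prod, mem_univ, true_and, mem_setOf_eq]
  refine ⟨T, D', ?_, ?_, hiden⟩
  · have hcont : Continuous (fun y : EuclideanSpace ℂ (Fin (n - 1)) =>
        (g.symm y : EuclideanSpace ℂ (Fin n))) :=
      (K.subtype.comp g.symm.toLinearMap).continuous_of_finiteDimensional
    exact hD.preimage hcont
  · have hTcont : Continuous (fun x => T₀ x) := T₀.toLinearMap.continuous_of_finiteDimensional
    have himgprod : D' = Prod.snd '' (T '' D) := by
      rw [hiden, snd_image_prod univ_nonempty]
    rw [himgprod]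
    have himg : T '' D = (fun x => T₀ x) '' D := by
      apply image_congr
      intro x _
      exact hTcoe x
    rw [himg, image_image]
    exact hconn.image _ (continuous_snd.comp hTcont).continuousOn
end

section
/- For ζ ∈ 𝔻 and t ∈ 𝔻, the Möbius map f_ζ(t) = (t + ζ)/(1 + conj(ζ)·t) satisfies |f_ζ(t) - e^{iθ}| ≤ (1-|ζ|)(1+|t|)/(1-|ζ||t|), where ζ = |ζ|e^{iθ}. -/
open Complex

theorem mobius_dist_to_boundary_point (ζ t : ℂ) (hζ0 : ζ ≠ 0)
    (hζ : ‖ζ‖ < 1) (ht : ‖t‖ < 1)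
    (θ : ℝ) (hpolar : ζ = (‖ζ‖ : ℂ) * Complex.exp (θ * Complex.I)) :
    ‖(t + ζ) / (1 + (starRingEnd ℂ) ζ * t) - Complex.exp (θ * Complex.I)‖ ≤
      (1 - ‖ζ‖) * (1 + ‖t‖) /
        (1 - ‖ζ‖ * ‖t‖) := by
  set r := ‖ζ‖ with hr
  set e := Complex.exp (θ * Complex.I) with he
  have habs_e : ‖e‖ = 1 := by
    rw [he, Complex.norm_exp]; simp
  have hr0 : 0 ≤ r := norm_nonneg ζ
  have ht0 : 0 ≤ ‖t‖ := norm_nonneg t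
  have hrt : r * ‖t‖ < 1 := by nlinarith
  set d : ℂ := 1 + (starRingEnd ℂ) ζ * t with hd
  have habs_ct : ‖(starRingEnd ℂ) ζ * t‖ = r * ‖t‖ := by
    rw [norm_mul, Complex.norm_conj]
  have hden : 1 - r * ‖t‖ ≤ ‖d‖ := by
    have h1 : ‖(1 : ℂ)‖ ≤ ‖d‖ + ‖(starRingEnd ℂ) ζ * t‖ := by
      calc ‖(1 : ℂ)‖ = ‖d - (starRingEnd ℂ) ζ * t‖ := by rw [hd]; ring_nf
        _ ≤ ‖d‖ + ‖(starRingEnd ℂ) ζ * t‖ := norm_sub_le _ _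
    rw [norm_one, habs_ct] at h1
    linarith
  have hdpos : 0 < ‖d‖ := lt_of_lt_of_le (by linarith) hden
  have hdne : d ≠ 0 := by
    intro h; rw [h] at hdpos; simp at hdpos
  have hc : (starRingEnd ℂ) ζ = (r : ℂ) * Complex.exp (-(θ * Complex.I)) := by
    rw [hpolar]
    rw [map_mul, ← Complex.exp_conj]
    simp [Complex.conj_ofReal]
  have hee : e * Complex.exp (-(θ * Complex.I)) = 1 := by
    rw [he, ← Complex.exp_add, add_neg_cancel, Complex.exp_zero]
  have hnum : (t + ζ) - e * d = (1 - (r : ℂ)) * (t - e) := by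
    rw [hd, hc]
    nth_rewrite 1 [hpolar]
    linear_combination (-(r : ℂ) * t) * hee
  have hsplit : (t + ζ) / d - e = ((1 - (r : ℂ)) * (t - e)) / d := by
    rw [eq_div_iff hdne, sub_mul, div_mul_cancel₀ _ hdne]
    exact hnum
  rw [hsplit, norm_div, norm_mul]
  have h1r : ‖1 - (r : ℂ)‖ = 1 - r := by
    rw [← Complex.ofReal_one, ← Complex.ofReal_sub, Complex.norm_real, Real.norm_eq_abs]
    exact abs_of_nonneg (by linarith)
  have hte : ‖t - e‖ ≤ ‖t‖ + 1 := by
    calc ‖t - e‖ ≤ ‖t‖ + ‖e‖ := norm_sub_le _ _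
      _ = ‖t‖ + 1 := by rw [habs_e]
  rw [h1r]
  apply div_le_div₀ (by nlinarith) (by nlinarith) (by linarith) hden
end

section
/- Let 0 < r' < r < 2, ζ ∈ 𝔻 with 1 - |ζ| < r' and |e^{iθ} - 1| < r - r' where ζ = |ζ|e^{iθ}. Set ρ(ζ) = (|ζ| + r' - 1)/(1 - (1-r')|ζ|). Then for all t with |t| < ρ(ζ), the point f_ζ(t) = (t+ζ)/(1+\bar{ζ}t) satisfies |f_ζ(t) - 1| < r. -/
open Complex

theorem mobius_image_near_one (r r' : ℝ) (hr' : 0 < r') (hr'r : r' < r) (hr : r < 2)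
    (ζ : ℂ) (hζ0 : ζ ≠ 0) (hζ : ‖ζ‖ < 1)
    (θ : ℝ) (hpolar : ζ = (‖ζ‖ : ℂ) * Complex.exp (θ * Complex.I))
    (h1 : 1 - ‖ζ‖ < r') (h2 : ‖Complex.exp (θ * Complex.I) - 1‖ < r - r') :
    ∀ t : ℂ, ‖t‖ < (‖ζ‖ + r' - 1) / (1 - (1 - r') * ‖ζ‖) →
      ‖(t + ζ) / (1 + (starRingEnd ℂ) ζ * t) - 1‖ < r := by
  intro t ht
  set a := ‖ζ‖ with ha
  have ha0 : 0 < a := norm_pos_iff.mpr hζ0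
  have ha1 : a < 1 := hζ
  have hD : 0 < 1 - (1 - r') * a := by nlinarith
  have hr'2 : r' < 2 := by linarith
  have hρ1 : (a + r' - 1) / (1 - (1 - r') * a) < 1 := by
    rw [div_lt_one hD]; nlinarith
  have htlt : ‖t‖ < 1 := ht.trans hρ1
  have htD : ‖t‖ * (1 - (1 - r') * a) < a + r' - 1 := (lt_div_iff₀ hD).mp ht
  set e := Complex.exp (θ * Complex.I) with he
  have habse : ‖e‖ = 1 := Complex.norm_exp_ofReal_mul_I θ
  have hee : e * (starRingEnd ℂ) e = 1 := by
    rw [mul_comm, Complex.conj_mul', habse]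
    norm_num
  have hconj : (starRingEnd ℂ) ζ = (a : ℂ) * (starRingEnd ℂ) e := by
    rw [hpolar, map_mul, Complex.conj_ofReal]
  have hden_pos : 0 < 1 - a * ‖t‖ := by nlinarith
  have habsw : ‖(starRingEnd ℂ) ζ * t‖ = a * ‖t‖ := by
    rw [norm_mul, Complex.norm_conj]
  have hdenabs : 1 - a * ‖t‖ ≤ ‖1 + (starRingEnd ℂ) ζ * t‖ := by
    have h1' := norm_add_le (1 + (starRingEnd ℂ) ζ * t) (-((starRingEnd ℂ) ζ * t))
    simp only [add_neg_cancel_right, norm_one] at h1'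
    rw [norm_neg, habsw] at h1'
    linarith
  have hden0 : (1 + (starRingEnd ℂ) ζ * t) ≠ 0 := by
    intro h
    rw [h, norm_zero] at hdenabs
    linarith
  have key : (t + ζ) / (1 + (starRingEnd ℂ) ζ * t) - e
      = (1 - (a : ℂ)) * (t - e) / (1 + (starRingEnd ℂ) ζ * t) := by
    rw [eq_div_iff hden0, sub_mul, div_mul_cancel₀ _ hden0]
    linear_combination hpolar + (-e * t) * hconj + (-((a : ℂ) * t)) * hee
  have h5 : ‖(t + ζ) / (1 + (starRingEnd ℂ) ζ * t) - e‖ < r' := by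
    rw [key, norm_div, norm_mul]
    rw [div_lt_iff₀ (lt_of_lt_of_le hden_pos hdenabs)]
    have hte : ‖t - e‖ ≤ ‖t‖ + 1 := by
      have := norm_add_le t (-e)
      simpa [sub_eq_add_neg, habse] using this
    have h1a : ‖1 - (a : ℂ)‖ = 1 - a := by
      rw [show ((1 : ℂ) - a) = ((1 - a : ℝ) : ℂ) by push_cast; ring,
        Complex.norm_real, Real.norm_eq_abs, _root_.abs_of_nonneg (by linarith)]
    rw [h1a]
    nlinarith [norm_nonneg (t - e), norm_nonneg t]
  have tri := norm_sub_le_norm_sub_add_norm_sub ((t + ζ) / (1 + (starRingEnd ℂ) ζ * t)) e 1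
  linarith
end

section
/- Let G be a plane domain with 𝔻_r ⊆ G ⊆ 𝔻 where 𝔻_r = {ζ ∈ 𝔻 : |ζ - 1| < r} for some r ∈ (0,2). Then for ζ ∈ G near 1, s_G(ζ) ≥ ρ(ζ) := (|ζ| + r' - 1)/(1 - (1-r')|ζ|) for any r' ∈ (1-|ζ|, r) with |ζ/|ζ| - 1| < r - r'. -/
open Metric Set

section AuxSqueezing

open Complex

private lemma auxSq_normSq (u v : ℂ) :
    normSq (1 - (starRingEnd ℂ) u * v) - normSq (v - u) = (1 - normSq u) * (1 - normSq v) := by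
  simp [normSq_apply, mul_re, mul_im, sub_re, sub_im, Complex.conj_re, Complex.conj_im]
  ring

private lemma auxSq_normSq' (u v : ℂ) :
    normSq (1 + (starRingEnd ℂ) u * v) - normSq (v + u) = (1 - normSq u) * (1 - normSq v) := by
  simp [normSq_apply, mul_re, mul_im, add_re, add_im, Complex.conj_re, Complex.conj_im]
  ring

private lemma auxSq_den_ne (u t : ℂ) (hu : ‖u‖ < 1) (ht : ‖t‖ < 1) :
    1 - (starRingEnd ℂ) u * t ≠ 0 := by
  intro h
  have h2 : (starRingEnd ℂ) u * t = 1 := by linear_combination -h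
  have := congrArg norm h2
  simp [map_mul] at this
  nlinarith [norm_nonneg u, norm_nonneg t]

private lemma auxSq_den_ne' (u t : ℂ) (hu : ‖u‖ < 1) (ht : ‖t‖ < 1) :
    1 + (starRingEnd ℂ) u * t ≠ 0 := by
  intro h
  have h2 : (starRingEnd ℂ) u * t = -1 := by linear_combination h
  have := congrArg norm h2
  simp [map_mul] at this
  nlinarith [norm_nonneg u, norm_nonneg t]

private lemma auxSq_nc_ne (u : ℂ) (hu : ‖u‖ < 1) :
    1 - u * (starRingEnd ℂ) u ≠ 0 := by
  have := auxSq_den_ne u u hu hu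
  intro h; apply this; linear_combination h

private lemma auxSq_comp1 (u t : ℂ) (hu : ‖u‖ < 1) (ht : ‖t‖ < 1) :
    ((t - u) / (1 - (starRingEnd ℂ) u * t) + u) /
      (1 + (starRingEnd ℂ) u * ((t - u) / (1 - (starRingEnd ℂ) u * t))) = t := by
  have hd := auxSq_den_ne u t hu ht
  have hnc := auxSq_nc_ne u hu
  have hd2 : 1 - t * (starRingEnd ℂ) u ≠ 0 := by rwa [mul_comm] at hd
  field_simp
  rw [div_eq_iff (by intro h; apply hnc; linear_combination h)]
  ring

private lemma auxSq_comp2 (u w : ℂ) (hu : ‖u‖ < 1) (hw : ‖w‖ < 1) :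
    ((w + u) / (1 + (starRingEnd ℂ) u * w) - u) /
      (1 - (starRingEnd ℂ) u * ((w + u) / (1 + (starRingEnd ℂ) u * w))) = w := by
  have hd := auxSq_den_ne' u w hu hw
  have hnc := auxSq_nc_ne u hu
  have hd2 : 1 + w * (starRingEnd ℂ) u ≠ 0 := by rwa [mul_comm] at hd
  field_simp
  rw [div_eq_iff (by intro h; apply hnc; linear_combination h)]
  ring

private lemma auxSq_abs_lt (u t : ℂ) (hu : ‖u‖ < 1) (ht : ‖t‖ < 1) :
    ‖(t - u) / (1 - (starRingEnd ℂ) u * t)‖ < 1 := by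
  have hd := auxSq_den_ne u t hu ht
  rw [norm_div, div_lt_one (norm_pos_iff.mpr hd)]
  rw [Complex.norm_def, Complex.norm_def]
  apply Real.sqrt_lt_sqrt (normSq_nonneg _)
  have h1 : normSq u < 1 := by rw [← Complex.sq_norm]; nlinarith [norm_nonneg u]
  have h2 : normSq t < 1 := by rw [← Complex.sq_norm]; nlinarith [norm_nonneg t]
  nlinarith [auxSq_normSq u t]

private lemma auxSq_abs_lt' (u w : ℂ) (hu : ‖u‖ < 1) (hw : ‖w‖ < 1) :
    ‖(w + u) / (1 + (starRingEnd ℂ) u * w)‖ < 1 := by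
  have hd := auxSq_den_ne' u w hu hw
  rw [norm_div, div_lt_one (norm_pos_iff.mpr hd)]
  rw [Complex.norm_def, Complex.norm_def]
  apply Real.sqrt_lt_sqrt (normSq_nonneg _)
  have h1 : normSq u < 1 := by rw [← Complex.sq_norm]; nlinarith [norm_nonneg u]
  have h2 : normSq w < 1 := by rw [← Complex.sq_norm]; nlinarith [norm_nonneg w]
  nlinarith [auxSq_normSq' u w]

private lemma auxSq_gsub (ζ w : ℂ) (hζ : ζ ≠ 0) (hden : 1 + (starRingEnd ℂ) ζ * w ≠ 0) :
    (w + ζ) / (1 + (starRingEnd ℂ) ζ * w) - ζ / (‖ζ‖ : ℂ) =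
      ((1 : ℂ) - (‖ζ‖ : ℂ)) * (w - ζ / (‖ζ‖ : ℂ)) /
        (1 + (starRingEnd ℂ) ζ * w) := by
  have hA : (‖ζ‖ : ℂ) ≠ 0 := by
    simpa using norm_ne_zero_iff.mpr hζ
  have hmc : (starRingEnd ℂ) ζ * ζ = ((‖ζ‖ : ℝ) : ℂ) ^ 2 := by
    rw [mul_comm, Complex.mul_conj]
    norm_cast
    exact (Complex.sq_norm ζ).symm
  rw [div_sub_div _ _ hden hA, sub_div' hA, mul_div_assoc', div_div, div_eq_div_iff (mul_ne_zero hden hA) (mul_ne_zero hA hden)]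
  linear_combination (- w * (‖ζ‖ : ℂ) - w ^ 2 * (‖ζ‖ : ℂ) *
    (starRingEnd ℂ) ζ) * hmc

end AuxSqueezing

/-- The squeezing function of a plane domain `G` at a point `ζ`. -/
noncomputable def squeezingFn1 (G : Set ℂ) (ζ : ℂ) : ℝ :=
  sSup (insert 0 {ρ : ℝ | 0 < ρ ∧ ∃ f : ℂ → ℂ,
    DifferentiableOn ℂ f G ∧ Set.InjOn f G ∧ f '' G ⊆ Metric.ball 0 1 ∧ f ζ = 0 ∧
    Metric.ball 0 ρ ⊆ f '' G})

theorem squeezing_lower_bound_near_one (G : Set ℂ) (hG : IsOpen G) (hGc : IsConnected G)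
    (r : ℝ) (hr0 : 0 < r) (hr2 : r < 2)
    (h1 : {ζ : ℂ | ‖ζ‖ < 1 ∧ ‖ζ - 1‖ < r} ⊆ G)
    (h2 : G ⊆ Metric.ball 0 1) :
    ∀ ζ ∈ G, ζ ≠ 0 → ∀ r' : ℝ, 1 - ‖ζ‖ < r' → r' < r →
      ‖ζ / (‖ζ‖ : ℂ) - 1‖ < r - r' →
      (‖ζ‖ + r' - 1) / (1 - (1 - r') * ‖ζ‖) ≤ squeezingFn1 G ζ := by
  intro ζ hζG hζ0 r' hr'1 hr'r hσ
  have habsG : ∀ t ∈ G, ‖t‖ < 1 := by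
    intro t ht
    have := h2 ht
    rwa [Metric.mem_ball, Complex.dist_eq, sub_zero] at this
  have hζb : ‖ζ‖ < 1 := habsG ζ hζG
  set a := ‖ζ‖ with ha_def
  have ha0 : 0 < a := norm_pos_iff.mpr hζ0
  set ρ := (a + r' - 1) / (1 - (1 - r') * a) with hρ_def
  have hden : 0 < 1 - (1 - r') * a := by nlinarith
  have hρ0 : 0 < ρ := div_pos (by linarith) hden
  have hr'2 : r' < 2 := by linarith
  have hρ1 : ρ < 1 := by rw [hρ_def, div_lt_one hden]; nlinarith
  have haρ : a * ρ < 1 := by nlinarith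
  have hkey : r' * (1 - a * ρ) = (1 - a) * (1 + ρ) := by
    rw [hρ_def, mul_div_assoc', one_sub_div hden.ne', one_add_div hden.ne', mul_div_assoc', mul_div_assoc', div_left_inj' hden.ne']; ring
  unfold squeezingFn1
  apply le_csSup
  · -- bounded above by 1
    refine ⟨1, ?_⟩
    intro x hx
    rcases hx with rfl | ⟨hx0, f, _, _, hsub, _, hball⟩
    · norm_num
    · by_contra hxle
      push_neg at hxle
      have h1m : (1 : ℂ) ∈ Metric.ball (0 : ℂ) x := by
        rw [Metric.mem_ball, Complex.dist_eq, sub_zero]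
        simpa using hxle
      have := hsub (hball h1m)
      rw [Metric.mem_ball, Complex.dist_eq, sub_zero] at this
      simp at this
  · refine Set.mem_insert_iff.mpr (Or.inr ⟨hρ0,
      fun t => (t - ζ) / (1 - (starRingEnd ℂ) ζ * t), ?_, ?_, ?_, ?_, ?_⟩)
    · -- differentiable
      apply DifferentiableOn.div
      · exact (differentiable_id.sub_const ζ).differentiableOn
      · exact ((differentiable_const _).sub
          ((differentiable_const _).mul differentiable_id)).differentiableOn
      · intro t ht
        exact auxSq_den_ne ζ t hζb (habsG t ht)
    · -- injective
      intro t1 ht1 t2 ht2 heq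
      have e1 := auxSq_comp1 ζ t1 hζb (habsG t1 ht1)
      have e2 := auxSq_comp1 ζ t2 hζb (habsG t2 ht2)
      rw [← e1, ← e2]
      simp only at heq
      rw [heq]
    · -- image in unit ball
      rintro _ ⟨t, ht, rfl⟩
      rw [Metric.mem_ball, Complex.dist_eq, sub_zero]
      exact auxSq_abs_lt ζ t hζb (habsG t ht)
    · -- sends ζ to 0
      simp
    · -- ball ρ in image
      intro w hw
      rw [Metric.mem_ball, Complex.dist_eq, sub_zero] at hw
      have hwρ : ‖w‖ < ρ := hw
      have hw1 : ‖w‖ < 1 := lt_trans hwρ hρ1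
      set t := (w + ζ) / (1 + (starRingEnd ℂ) ζ * w) with ht_def
      have hdw := auxSq_den_ne' ζ w hζb hw1
      have ht1 : ‖t‖ < 1 := auxSq_abs_lt' ζ w hζb hw1
      set σ := ζ / (‖ζ‖ : ℂ) with hσ_def
      have habsσ : ‖σ‖ = 1 := by
        rw [hσ_def, norm_div, Complex.norm_of_nonneg ha0.le, div_self (ne_of_gt ha0)]
      -- |t - σ| < r'
      have hgs := auxSq_gsub ζ w hζ0 hdw
      have hx0 : 0 ≤ ‖w‖ := norm_nonneg w
      have haw : 0 < 1 - a * ‖w‖ := by nlinarith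
      have habsden : 1 - a * ‖w‖ ≤ ‖1 + (starRingEnd ℂ) ζ * w‖ := by
        have := norm_sub_norm_le (1 : ℂ) (-((starRingEnd ℂ) ζ * w))
        simp only [sub_neg_eq_add, norm_one] at this
        calc 1 - a * ‖w‖
            = 1 - ‖-((starRingEnd ℂ) ζ * w)‖ := by
              rw [norm_neg, norm_mul, Complex.norm_conj]
          _ ≤ ‖1 + (starRingEnd ℂ) ζ * w‖ := this
      have hnum : ‖((1 : ℂ) - (a : ℂ)) * (w - σ)‖ ≤
          (1 - a) * (‖w‖ + 1) := by
        rw [norm_mul]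
        have h1a : ‖(1 : ℂ) - (a : ℂ)‖ = 1 - a := by
          rw [show (1 : ℂ) - (a : ℂ) = ((1 - a : ℝ) : ℂ) by push_cast; ring,
            Complex.norm_of_nonneg (by linarith)]
        rw [h1a]
        have : ‖w - σ‖ ≤ ‖w‖ + 1 := by
          calc ‖w - σ‖ ≤ ‖w‖ + ‖σ‖ := by
                simpa [sub_eq_add_neg] using norm_add_le w (-σ)
            _ = ‖w‖ + 1 := by rw [habsσ]
        nlinarith
      have hnum' : (1 - a) * (‖w‖ + 1) < r' * (1 - a * ‖w‖) := by
        nlinarith [mul_pos (sub_pos.mpr hwρ) (show (0:ℝ) < 1 - a + r' * a by nlinarith)]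
      have hts : ‖t - σ‖ < r' := by
        rw [hgs, norm_div]
        rw [div_lt_iff₀ (lt_of_lt_of_le haw habsden)]
        calc ‖((1 : ℂ) - (a : ℂ)) * (w - σ)‖
            ≤ (1 - a) * (‖w‖ + 1) := hnum
          _ < r' * (1 - a * ‖w‖) := hnum'
          _ ≤ r' * ‖1 + (starRingEnd ℂ) ζ * w‖ := by
              apply mul_le_mul_of_nonneg_left habsden (by linarith)
      have ht1r : ‖t - 1‖ < r := by
        calc ‖t - 1‖ ≤ ‖t - σ‖ + ‖σ - 1‖ := by
              simpa using norm_add_le (t - σ) (σ - 1)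
          _ < r' + (r - r') := by
              apply add_lt_add hts
              exact hσ
          _ = r := by ring
      refine ⟨t, h1 ⟨ht1, ht1r⟩, ?_⟩
      simp only
      rw [ht_def]
      exact auxSq_comp2 ζ w hζb hw1
end

section
/- Let G ⊆ 𝔻 be a plane domain with 𝔻_r = {ζ ∈ 𝔻 : |ζ-1| < r} ⊆ G for some r ∈ (0,2). Then limsup_{ζ→1, ζ∈G} (1 - s_G(ζ))/(1 - |ζ|) ≤ (2-r)/r. -/
open Metric Set Filter Topology

private lemma key_id (ζ z : ℂ) :
    Complex.normSq (1 - (starRingEnd ℂ) ζ * z) - Complex.normSq (z - ζ)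
      = (1 - Complex.normSq ζ) * (1 - Complex.normSq z) := by
  simp only [Complex.normSq_apply, Complex.sub_re, Complex.sub_im, Complex.mul_re,
    Complex.mul_im, Complex.one_re, Complex.one_im, Complex.conj_re, Complex.conj_im]
  ring

private lemma sqz_bddAbove (G : Set ℂ) (ζ : ℂ) :
    ∀ x ∈ (insert 0 {ρ : ℝ | 0 < ρ ∧ ∃ f : ℂ → ℂ,
      DifferentiableOn ℂ f G ∧ Set.InjOn f G ∧ f '' G ⊆ Metric.ball 0 1 ∧ f ζ = 0 ∧
      Metric.ball 0 ρ ⊆ f '' G}), x ≤ 1 := by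
  rintro x (rfl | ⟨hx0, f, _, _, him, _, hball⟩)
  · norm_num
  · by_contra hx1
    push_neg at hx1
    have hp : (((1 + x) / 2 : ℝ) : ℂ) ∈ Metric.ball (0 : ℂ) x := by
      rw [Metric.mem_ball, Complex.dist_eq, sub_zero, Complex.norm_real, Real.norm_eq_abs]
      rw [abs_of_pos (by linarith)]
      linarith
    have := him (hball hp)
    rw [Metric.mem_ball, Complex.dist_eq, sub_zero, Complex.norm_real, Real.norm_eq_abs,
      abs_of_pos (by linarith)] at this
    linarith

private lemma sqz_le_one (G : Set ℂ) (ζ : ℂ) : squeezingFn1 G ζ ≤ 1 :=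
  csSup_le (by simp) (sqz_bddAbove G ζ)

private lemma estimate (r : ℝ) (hr0 : 0 < r) (hr2 : r < 2) (ζ z : ℂ)
    (hζ : ‖ζ‖ < 1) (hz : ‖z‖ < 1)
    (ht : ‖ζ - 1‖ < r) (hs : r ≤ ‖z - 1‖) :
    (1 - Complex.normSq ζ) * (1 - Complex.normSq z) ≤
      (2 * (1 - ‖ζ‖) * (r * (2 - r)) / (r - ‖ζ - 1‖) ^ 2) *
        Complex.normSq (1 - (starRingEnd ℂ) ζ * z) := by
  set t := ‖ζ - 1‖ with htdef
  set s := ‖z - 1‖ with hsdef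
  set a := ‖ζ‖ with hadef
  set b := ‖z‖ with hbdef
  have ht0 : 0 ≤ t := norm_nonneg _
  have hb0 : 0 ≤ b := norm_nonneg _
  have ha0 : 0 ≤ a := norm_nonneg _
  have hs2 : s < 2 := by
    have : s ≤ b + 1 := by
      have := norm_sub_le z 1
      simpa using this
    linarith
  -- |1 - conj ζ * z| ≥ s - t
  have habs1 : s - t ≤ ‖1 - (starRingEnd ℂ) ζ * z‖ := by
    have hrw : (1 : ℂ) - (starRingEnd ℂ) ζ * z = (1 - z) + (1 - (starRingEnd ℂ) ζ) * z := by
      ring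
    have h1 : ‖(1 - (starRingEnd ℂ) ζ) * z‖
        = ‖1 - (starRingEnd ℂ) ζ‖ * b := by
      rw [norm_mul]
    have h2 : ‖1 - (starRingEnd ℂ) ζ‖ = t := by
      have : (1 : ℂ) - (starRingEnd ℂ) ζ = (starRingEnd ℂ) (1 - ζ) := by
        simp [map_sub]
      rw [this, Complex.norm_conj]
      rw [htdef, ← norm_neg]
      ring_nf
    have h3 : ‖1 - z‖ = s := by
      rw [hsdef, ← norm_neg]; ring_nf
    have h4 : ‖1 - z‖ ≤ ‖(1:ℂ) - (starRingEnd ℂ) ζ * z‖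
        + ‖(1 - (starRingEnd ℂ) ζ) * z‖ := by
      calc ‖1 - z‖
          = ‖((1:ℂ) - (starRingEnd ℂ) ζ * z) - ((1 - (starRingEnd ℂ) ζ) * z)‖ := by
            congr 1; ring
        _ ≤ _ := norm_sub_le _ _
    have h5 : ‖(1 - (starRingEnd ℂ) ζ) * z‖ ≤ t := by
      rw [h1, h2]
      nlinarith
    rw [h3] at h4
    linarith
  have hBq : (s - t) ^ 2 ≤ Complex.normSq (1 - (starRingEnd ℂ) ζ * z) := by
    rw [← Complex.sq_norm]
    have hst : 0 ≤ s - t := by linarith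
    nlinarith
  have h1z : 1 - Complex.normSq z ≤ 2 * s - s ^ 2 := by
    have hid : Complex.normSq z = 1 - 2 * (1 - z).re + Complex.normSq (1 - z) := by
      simp only [Complex.normSq_apply, Complex.sub_re, Complex.sub_im, Complex.one_re,
        Complex.one_im]
      ring
    have h3 : Complex.normSq (1 - z) = s ^ 2 := by
      rw [← Complex.sq_norm]
      congr 1
      rw [hsdef, ← norm_neg]; ring_nf
    have h4 : (1 - z).re ≤ s := by
      calc (1 - z).re ≤ ‖1 - z‖ := Complex.re_le_norm _
        _ = s := by rw [hsdef, ← norm_neg]; ring_nf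
    rw [hid, h3]
    nlinarith
  have hζsq : 1 - Complex.normSq ζ ≤ 2 * (1 - a) := by
    rw [← Complex.sq_norm]
    nlinarith
  have hnsz : Complex.normSq z ≤ 1 := by rw [← Complex.sq_norm]; nlinarith
  have hnsζ : Complex.normSq ζ ≤ 1 := by rw [← Complex.sq_norm]; nlinarith
  have hrt : 0 < r - t := by linarith
  have hkey : s * (2 - s) * (r - t) ^ 2 ≤ r * (2 - r) * (s - t) ^ 2 := by
    nlinarith [mul_nonneg (mul_nonneg (by linarith : (0:ℝ) ≤ 2 - r) (by linarith : (0:ℝ) ≤ s - r))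
        (by nlinarith : (0:ℝ) ≤ r * s - t ^ 2),
      mul_nonneg (mul_nonneg (by linarith : (0:ℝ) ≤ s) (sq_nonneg (r - t)))
        (by linarith : (0:ℝ) ≤ s - r)]
  rw [div_mul_eq_mul_div, le_div_iff₀ (by positivity)]
  have hda : 0 ≤ 1 - a := by linarith
  calc (1 - Complex.normSq ζ) * (1 - Complex.normSq z) * (r - t) ^ 2
      ≤ (2 * (1 - a)) * (2 * s - s ^ 2) * (r - t) ^ 2 := by
        apply mul_le_mul_of_nonneg_right _ (sq_nonneg _)
        apply mul_le_mul hζsq h1z (by linarith) (by linarith)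
    _ = (2 * (1 - a)) * (s * (2 - s) * (r - t) ^ 2) := by ring
    _ ≤ (2 * (1 - a)) * (r * (2 - r) * (s - t) ^ 2) := by
        apply mul_le_mul_of_nonneg_left hkey (by linarith)
    _ ≤ (2 * (1 - a)) * (r * (2 - r) * Complex.normSq (1 - (starRingEnd ℂ) ζ * z)) := by
        apply mul_le_mul_of_nonneg_left _ (by linarith)
        apply mul_le_mul_of_nonneg_left hBq (by nlinarith)
    _ = 2 * (1 - a) * (r * (2 - r)) * Complex.normSq (1 - (starRingEnd ℂ) ζ * z) := by ring

private lemma sq_lower (G : Set ℂ) (r : ℝ) (hr0 : 0 < r) (hr2 : r < 2)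
    (h1 : {z : ℂ | ‖z‖ < 1 ∧ ‖z - 1‖ < r} ⊆ G)
    (h2 : G ⊆ Metric.ball 0 1) (ζ : ℂ) (hζG : ζ ∈ G)
    (ht : ‖ζ - 1‖ < r)
    (hE1 : 2 * (1 - ‖ζ‖) * (r * (2 - r)) / (r - ‖ζ - 1‖) ^ 2 < 1) :
    Real.sqrt (1 - 2 * (1 - ‖ζ‖) * (r * (2 - r)) / (r - ‖ζ - 1‖) ^ 2)
      ≤ squeezingFn1 G ζ := by
  set E := 2 * (1 - ‖ζ‖) * (r * (2 - r)) / (r - ‖ζ - 1‖) ^ 2 with hEdef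
  have hζb : ‖ζ‖ < 1 := by
    have := h2 hζG
    rwa [Metric.mem_ball, Complex.dist_eq, sub_zero] at this
  have hE0 : 0 ≤ E := by
    apply div_nonneg _ (sq_nonneg _)
    exact mul_nonneg (by nlinarith) (by nlinarith)
  set ρ := Real.sqrt (1 - E) with hρdef
  have hρ0 : 0 < ρ := Real.sqrt_pos.mpr (by linarith)
  have hρ1 : ρ ≤ 1 := Real.sqrt_le_one.mpr (by linarith)
  have hρsq : ρ ^ 2 = 1 - E := Real.sq_sqrt (by linarith)
  set f : ℂ → ℂ := fun z => (z - ζ) / (1 - (starRingEnd ℂ) ζ * z) with hfdef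
  -- denominators nonzero on the disc
  have hden : ∀ z : ℂ, ‖z‖ < 1 → (1 : ℂ) - (starRingEnd ℂ) ζ * z ≠ 0 := by
    intro z hz
    have hpos : 0 < Complex.normSq (1 - (starRingEnd ℂ) ζ * z) := by
      have := key_id ζ z
      have h1 : 0 ≤ Complex.normSq (z - ζ) := Complex.normSq_nonneg _
      have h2 : 0 < (1 - Complex.normSq ζ) * (1 - Complex.normSq z) := by
        apply mul_pos
        · rw [← Complex.sq_norm]; nlinarith [norm_nonneg ζ]
        · rw [← Complex.sq_norm]; nlinarith [norm_nonneg z]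
      linarith
    exact fun h => by rw [h] at hpos; simp at hpos
  have habsf : ∀ z : ℂ, ‖z‖ < 1 → ‖f z‖ < 1 := by
    intro z hz
    have hd := hden z hz
    have hBq : 0 < Complex.normSq (1 - (starRingEnd ℂ) ζ * z) := Complex.normSq_pos.mpr hd
    have hlt : Complex.normSq (z - ζ) < Complex.normSq (1 - (starRingEnd ℂ) ζ * z) := by
      have := key_id ζ z
      have h2 : 0 < (1 - Complex.normSq ζ) * (1 - Complex.normSq z) := by
        apply mul_pos
        · rw [← Complex.sq_norm]; nlinarith [norm_nonneg ζ]
        · rw [← Complex.sq_norm]; nlinarith [norm_nonneg z]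
      linarith
    have : Complex.normSq (f z) < 1 := by
      rw [hfdef]
      simp only
      rw [Complex.normSq_div]
      rw [div_lt_one hBq]
      exact hlt
    rw [← Complex.sq_norm] at this
    nlinarith [norm_nonneg (f z)]
  have hmem : ρ ∈ (insert 0 {ρ : ℝ | 0 < ρ ∧ ∃ f : ℂ → ℂ,
      DifferentiableOn ℂ f G ∧ Set.InjOn f G ∧ f '' G ⊆ Metric.ball 0 1 ∧ f ζ = 0 ∧
      Metric.ball 0 ρ ⊆ f '' G}) := by
    right
    refine ⟨hρ0, f, ?_, ?_, ?_, ?_, ?_⟩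
    · apply DifferentiableOn.div
      · exact (differentiable_id.sub_const ζ).differentiableOn
      · exact ((differentiable_const _ |>.mul differentiable_id).const_sub 1).differentiableOn
      · intro z hz
        exact hden z (by have := h2 hz; rwa [Metric.mem_ball, Complex.dist_eq, sub_zero] at this)
    · intro z1 hz1 z2 hz2 hf
      have hb1 : ‖z1‖ < 1 := by
        have := h2 hz1; rwa [Metric.mem_ball, Complex.dist_eq, sub_zero] at this
      have hb2 : ‖z2‖ < 1 := by
        have := h2 hz2; rwa [Metric.mem_ball, Complex.dist_eq, sub_zero] at this
      have hd1 := hden z1 hb1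
      have hd2 := hden z2 hb2
      rw [hfdef] at hf
      simp only at hf
      rw [div_eq_div_iff hd1 hd2] at hf
      have hkey : (z1 - z2) * (1 - (starRingEnd ℂ) ζ * ζ) = 0 := by linear_combination hf
      have : (1 : ℂ) - (starRingEnd ℂ) ζ * ζ ≠ 0 := by
        intro h
        have h2' : (starRingEnd ℂ) ζ * ζ = (Complex.normSq ζ : ℂ) := by
          rw [mul_comm, Complex.mul_conj]
        rw [h2'] at h
        have : (Complex.normSq ζ : ℝ) = 1 := by
          have := sub_eq_zero.mp h
          exact_mod_cast this.symm
        rw [← Complex.sq_norm] at this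
        nlinarith [norm_nonneg ζ]
      rcases mul_eq_zero.mp hkey with h | h
      · exact sub_eq_zero.mp h
      · exact absurd h this
    · rintro w ⟨z, hz, rfl⟩
      have hb : ‖z‖ < 1 := by
        have := h2 hz; rwa [Metric.mem_ball, Complex.dist_eq, sub_zero] at this
      rw [Metric.mem_ball, Complex.dist_eq, sub_zero]
      exact habsf z hb
    · rw [hfdef]; simp
    · intro w hw
      rw [Metric.mem_ball, Complex.dist_eq, sub_zero] at hw
      have hw1 : ‖w‖ < 1 := lt_of_lt_of_le hw hρ1
      set z := (w + ζ) / (1 + (starRingEnd ℂ) ζ * w) with hzdef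
      -- identity for the inverse map
      have hid2 : Complex.normSq (1 + (starRingEnd ℂ) ζ * w) - Complex.normSq (w + ζ)
          = (1 - Complex.normSq ζ) * (1 - Complex.normSq w) := by
        simp only [Complex.normSq_apply, Complex.add_re, Complex.add_im, Complex.mul_re,
          Complex.mul_im, Complex.one_re, Complex.one_im, Complex.conj_re, Complex.conj_im]
        ring
      have hpos2 : 0 < (1 - Complex.normSq ζ) * (1 - Complex.normSq w) := by
        apply mul_pos
        · rw [← Complex.sq_norm]; nlinarith [norm_nonneg ζ]
        · rw [← Complex.sq_norm]; nlinarith [norm_nonneg w]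
      have hden2 : (1 : ℂ) + (starRingEnd ℂ) ζ * w ≠ 0 := by
        have hpos : 0 < Complex.normSq (1 + (starRingEnd ℂ) ζ * w) := by
          have := Complex.normSq_nonneg (w + ζ)
          linarith
        exact fun h => by rw [h] at hpos; simp at hpos
      have hzb : ‖z‖ < 1 := by
        have hlt : Complex.normSq (w + ζ) < Complex.normSq (1 + (starRingEnd ℂ) ζ * w) := by
          linarith
        have hBq : 0 < Complex.normSq (1 + (starRingEnd ℂ) ζ * w) := by
          have := Complex.normSq_nonneg (w + ζ); linarith
        have : Complex.normSq z < 1 := by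
          rw [hzdef, Complex.normSq_div, div_lt_one hBq]
          exact hlt
        rw [← Complex.sq_norm] at this
        nlinarith [norm_nonneg z]
      have hfz : f z = w := by
        rw [hfdef, hzdef]
        simp only
        rw [div_eq_iff (hden (((w + ζ) / (1 + (starRingEnd ℂ) ζ * w))) (by rw [← hzdef]; exact hzb))]
        linear_combination div_mul_cancel₀ (w + ζ) hden2
      -- show z ∈ G
      have hzG : z ∈ G := by
        apply h1
        refine ⟨hzb, ?_⟩
        by_contra hcon
        push_neg at hcon
        have hest := estimate r hr0 hr2 ζ z hζb hzb ht hcon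
        -- normSq (f z) ≥ 1 - E
        have hBq : 0 < Complex.normSq (1 - (starRingEnd ℂ) ζ * z) :=
          Complex.normSq_pos.mpr (hden z hzb)
        have hge : (1 - E) * Complex.normSq (1 - (starRingEnd ℂ) ζ * z)
            ≤ Complex.normSq (z - ζ) := by
          have := key_id ζ z
          nlinarith
        have hfzn : Complex.normSq (f z) = Complex.normSq (z - ζ) /
            Complex.normSq (1 - (starRingEnd ℂ) ζ * z) := by
          rw [hfdef]; simp only; rw [Complex.normSq_div]
        have h1E : 1 - E ≤ Complex.normSq (f z) := by
          rw [hfzn, le_div_iff₀ hBq]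
          exact hge
        rw [hfz] at h1E
        have : Complex.normSq w < 1 - E := by
          rw [← Complex.sq_norm, ← hρsq]
          exact pow_lt_pow_left₀ hw (norm_nonneg w) (by norm_num)
        linarith
      exact ⟨z, hzG, hfz⟩
  exact le_csSup ⟨1, sqz_bddAbove G ζ⟩ hmem

theorem squeezing_limsup_near_one (G : Set ℂ) (hG : IsOpen G) (hGc : IsConnected G)
    (r : ℝ) (hr0 : 0 < r) (hr2 : r < 2)
    (h1 : {ζ : ℂ | ‖ζ‖ < 1 ∧ ‖ζ - 1‖ < r} ⊆ G)
    (h2 : G ⊆ Metric.ball 0 1) :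
    Filter.limsup (fun ζ : ℂ => (1 - squeezingFn1 G ζ) / (1 - ‖ζ‖))
      (nhdsWithin 1 G) ≤ (2 - r) / r := by
  have hc0 : 0 < r * (2 - r) := by nlinarith
  -- the filter is nontrivial
  have hne : (nhdsWithin (1 : ℂ) G).NeBot := by
    rw [← mem_closure_iff_nhdsWithin_neBot]
    set c : ℝ := min (r / 2) (1 / 2) with hcdef
    have hc1 : 0 < c := by positivity
    have hmemG : ∀ n : ℕ, ((1 - c / (n + 1) : ℝ) : ℂ) ∈ G := by
      intro n
      have hx0 : 0 < c / (n + 1) := by positivity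
      have hx1 : c / (n + 1) ≤ c := by
        apply div_le_self (le_of_lt hc1)
        push_cast; linarith [Nat.cast_nonneg (α := ℝ) n]
      apply h1
      constructor
      · have hc12 : c ≤ 1 / 2 := min_le_right _ _
        rw [Complex.norm_real, Real.norm_eq_abs, abs_of_pos (by linarith)]
        linarith
      · have : ((1 - c / (n + 1) : ℝ) : ℂ) - 1 = ((-(c / (n + 1)) : ℝ) : ℂ) := by push_cast; ring
        rw [this, Complex.norm_real, Real.norm_eq_abs, abs_neg, abs_of_pos hx0]
        calc c / (n+1) ≤ c := hx1
          _ ≤ r / 2 := min_le_left _ _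
          _ < r := by linarith
    have htd : Tendsto (fun n : ℕ => ((1 - c / (n + 1) : ℝ) : ℂ)) atTop (𝓝 1) := by
      have h0 : Tendsto (fun n : ℕ => (1 - c / (n + 1) : ℝ)) atTop (𝓝 1) := by
        have := (tendsto_one_div_add_atTop_nhds_zero_nat).const_mul c
        have h' : Tendsto (fun n : ℕ => c / (n + 1) : ℕ → ℝ) atTop (𝓝 0) := by
          simpa [div_eq_mul_inv, mul_comm] using this
        have := h'.const_sub 1
        simpa using this
      have := (Complex.continuous_ofReal.tendsto (1:ℝ)).comp h0
      rw [show ((1:ℝ):ℂ) = 1 from Complex.ofReal_one] at this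
      exact this
    exact mem_closure_of_tendsto htd (Eventually.of_forall hmemG)
  -- abbreviations
  set u := fun ζ : ℂ => (1 - squeezingFn1 G ζ) / (1 - ‖ζ‖) with hudef
  set F := fun ζ : ℂ => 2 * (r * (2 - r)) / (r - ‖ζ - 1‖) ^ 2 with hFdef
  set v := fun ζ : ℂ =>
    F ζ * (1 / (1 + Real.sqrt (1 - (1 - ‖ζ‖) * F ζ))) with hvdef
  -- basic limits
  have htt : Tendsto (fun ζ : ℂ => ‖ζ - 1‖) (nhdsWithin 1 G) (𝓝 0) := by
    have : Continuous (fun ζ : ℂ => ‖ζ - 1‖) :=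
      continuous_norm.comp (continuous_id.sub continuous_const)
    exact (this.tendsto' 1 0 (by simp)).mono_left (nhdsWithin_le_nhds (s := G))
  have hta : Tendsto (fun ζ : ℂ => 1 - ‖ζ‖) (nhdsWithin 1 G) (𝓝 0) := by
    have : Continuous (fun ζ : ℂ => 1 - ‖ζ‖) :=
      continuous_const.sub continuous_norm
    exact (this.tendsto' 1 0 (by simp)).mono_left (nhdsWithin_le_nhds (s := G))
  have hF : Tendsto F (nhdsWithin 1 G) (𝓝 (2 * (r * (2 - r)) / r ^ 2)) := by
    rw [hFdef]
    have hd : Tendsto (fun ζ : ℂ => (r - ‖ζ - 1‖) ^ 2) (nhdsWithin 1 G)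
        (𝓝 (r ^ 2)) := by
      have := ((tendsto_const_nhds (x := r)).sub htt).pow 2
      simpa using this
    exact Tendsto.div tendsto_const_nhds hd (by positivity)
  have hE : Tendsto (fun ζ : ℂ => (1 - ‖ζ‖) * F ζ) (nhdsWithin 1 G) (𝓝 0) := by
    have := hta.mul hF
    simpa using this
  have hH : Tendsto (fun ζ : ℂ => 1 / (1 + Real.sqrt (1 - (1 - ‖ζ‖) * F ζ)))
      (nhdsWithin 1 G) (𝓝 (1 / 2)) := by
    have h10 : Tendsto (fun ζ : ℂ => 1 - (1 - ‖ζ‖) * F ζ) (nhdsWithin 1 G)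
        (𝓝 1) := by
      have := (tendsto_const_nhds (x := (1:ℝ))).sub hE
      simpa using this
    have hs : Tendsto (fun ζ : ℂ => Real.sqrt (1 - (1 - ‖ζ‖) * F ζ))
        (nhdsWithin 1 G) (𝓝 1) := by
      have := (Real.continuous_sqrt.tendsto 1).comp h10
      rw [Real.sqrt_one] at this
      exact this
    have hsum : Tendsto (fun ζ : ℂ => 1 + Real.sqrt (1 - (1 - ‖ζ‖) * F ζ))
        (nhdsWithin 1 G) (𝓝 2) := by
      have := hs.const_add 1
      norm_num at this
      exact this
    exact Tendsto.div (tendsto_const_nhds (x := (1:ℝ))) hsum (by norm_num)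
  have hv : Tendsto v (nhdsWithin 1 G) (𝓝 ((2 - r) / r)) := by
    have := hF.mul hH
    have heq : 2 * (r * (2 - r)) / r ^ 2 * (1 / 2) = (2 - r) / r := by
      field_simp
    rwa [heq] at this
  -- eventual bound u ≤ᶠ v
  set δ : ℝ := min (r / 2) ((r / 2) ^ 2 / (2 * (2 * (r * (2 - r))))) with hδdef
  have hδ0 : 0 < δ := by positivity
  have hevt : ∀ᶠ ζ in nhdsWithin 1 G, ‖ζ - 1‖ < δ :=
    htt.eventually_lt_const hδ0
  have hevG : ∀ᶠ ζ in nhdsWithin 1 G, ζ ∈ G := eventually_mem_nhdsWithin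
  have hev : u ≤ᶠ[nhdsWithin 1 G] v := by
    filter_upwards [hevt, hevG] with ζ htδ hζG
    have hζb : ‖ζ‖ < 1 := by
      have := h2 hζG
      rwa [Metric.mem_ball, Complex.dist_eq, sub_zero] at this
    have hd0 : 0 < 1 - ‖ζ‖ := by linarith
    set t := ‖ζ - 1‖ with htdef
    have ht0 : 0 ≤ t := norm_nonneg _
    have htr : t < r := by
      calc t < δ := htδ
        _ ≤ r / 2 := min_le_left _ _
        _ < r := by linarith
    have hrt2 : (r / 2) ^ 2 ≤ (r - t) ^ 2 := by
      have h1' : t ≤ r / 2 := le_of_lt (lt_of_lt_of_le htδ (min_le_left _ _))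
      nlinarith
    have hdt : 1 - ‖ζ‖ ≤ t := by
      have h1' : (1:ℝ) ≤ ‖ζ‖ + t := by
        calc (1:ℝ) = ‖ζ + (1 - ζ)‖ := by norm_num
          _ ≤ ‖ζ‖ + ‖1 - ζ‖ := norm_add_le _ _
          _ = ‖ζ‖ + t := by
            rw [htdef]; congr 1; rw [← norm_neg]; ring_nf
      linarith
    have hE1 : (1 - ‖ζ‖) * F ζ < 1 := by
      have hFpos : 0 < F ζ := by
        rw [hFdef]
        apply div_pos (by nlinarith) (by nlinarith)
      have hFb : F ζ ≤ 2 * (r * (2 - r)) / (r / 2) ^ 2 := by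
        rw [hFdef]
        apply div_le_div_of_nonneg_left (by nlinarith) (by positivity) hrt2
      have hδ2 : δ ≤ (r / 2) ^ 2 / (2 * (2 * (r * (2 - r)))) := min_le_right _ _
      calc (1 - ‖ζ‖) * F ζ ≤ t * F ζ := by
            apply mul_le_mul_of_nonneg_right hdt (le_of_lt hFpos)
        _ ≤ δ * (2 * (r * (2 - r)) / (r / 2) ^ 2) := by
            apply mul_le_mul (le_of_lt htδ) hFb (le_of_lt hFpos) (le_of_lt hδ0)
        _ ≤ ((r / 2) ^ 2 / (2 * (2 * (r * (2 - r))))) * (2 * (r * (2 - r)) / (r / 2) ^ 2) := by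
            apply mul_le_mul_of_nonneg_right hδ2 (by positivity)
        _ = 1 / 2 := by
            rw [div_mul_div_comm, div_eq_iff (mul_pos (by linarith) (by positivity)).ne']; ring
        _ < 1 := by norm_num
    -- relate E forms
    have hEform : 2 * (1 - ‖ζ‖) * (r * (2 - r)) / (r - ‖ζ - 1‖) ^ 2
        = (1 - ‖ζ‖) * F ζ := by
      rw [hFdef]
      field_simp
    have hsl := sq_lower G r hr0 hr2 h1 h2 ζ hζG htr (by rw [hEform]; exact hE1)
    rw [hEform] at hsl
    set E := (1 - ‖ζ‖) * F ζ with hEdef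
    have hEnn : 0 ≤ E := by
      rw [hEdef, hFdef]
      positivity
    have hsq1 : Real.sqrt (1 - E) ^ 2 = 1 - E := Real.sq_sqrt (by linarith)
    have hsqnn : 0 ≤ Real.sqrt (1 - E) := Real.sqrt_nonneg _
    -- u ζ ≤ (1 - sqrt(1-E)) / (1 - |ζ|) = F ζ / (1 + sqrt (1-E))
    have hub : u ζ ≤ (1 - Real.sqrt (1 - E)) / (1 - ‖ζ‖) := by
      show (1 - squeezingFn1 G ζ) / (1 - ‖ζ‖) ≤ _
      gcongr
    have hveq : v ζ = (1 - Real.sqrt (1 - E)) / (1 - ‖ζ‖) := by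
      show F ζ * (1 / (1 + Real.sqrt (1 - E))) = _
      have hden : (0:ℝ) < 1 + Real.sqrt (1 - E) := by linarith
      rw [mul_one_div, div_eq_div_iff (ne_of_gt hden) (ne_of_gt hd0)]
      linear_combination hsq1 - hEdef
    calc u ζ ≤ (1 - Real.sqrt (1 - E)) / (1 - ‖ζ‖) := hub
      _ = v ζ := hveq.symm
  have hcb : (nhdsWithin (1:ℂ) G).IsCoboundedUnder (· ≤ ·) u := by
    apply isCoboundedUnder_le_of_eventually_le (nhdsWithin 1 G) (x := 0)
    filter_upwards [hevG] with ζ hζG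
    have hζb : ‖ζ‖ < 1 := by
      have := h2 hζG
      rwa [Metric.mem_ball, Complex.dist_eq, sub_zero] at this
    rw [hudef]
    apply div_nonneg _ (by linarith)
    have := sqz_le_one G ζ
    linarith
  calc Filter.limsup u (nhdsWithin 1 G) ≤ Filter.limsup v (nhdsWithin 1 G) :=
        limsup_le_limsup hev hcb hv.isBoundedUnder_le
    _ = (2 - r) / r := hv.limsup_eq
end
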